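/- arXiv:1911.10240 — 10 statements merged into one kernel-verified Lean document; each statement's English description precedes it below -/
import Mathlib

section
/- For every finite oriented graph D, the hull number of D is at most |ext(D)| + (2/3)·|V(D) \ ext(D)|, where ext(D) is the set of extreme vertices of D. -/
variable {V : Type*}

/-- A directed walk from `u` to `v` given as its list of vertices. -/
def DiwalkFrom (A : V → V → Prop) (u v : V) (l : List V) : Prop :=
  l.Chain' A ∧ l.head? = some u ∧ l.getLast? = some v

/-- A `(u,v)`-geodesic: a directed walk of minimum length (hence a shortest directed path). -/
def IsGeodesic (A : V → V → Prop) (u v : V) (l : List V) : Prop :=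
  DiwalkFrom A u v l ∧ ∀ l', DiwalkFrom A u v l' → l.length ≤ l'.length

/-- The interval `I(S)`: `S` together with all vertices on geodesics between members of `S`. -/
def geoInterval (A : V → V → Prop) (S : Set V) : Set V :=
  S ∪ {w | ∃ u ∈ S, ∃ v ∈ S, ∃ l, IsGeodesic A u v l ∧ w ∈ l}

def GeoConvex (A : V → V → Prop) (S : Set V) : Prop := geoInterval A S = S

/-- The geodesic convex hull of `S`. -/
def geoHull (A : V → V → Prop) (S : Set V) : Set V := ⋂₀ {T | S ⊆ T ∧ GeoConvex A T}

def IsHullSet (A : V → V → Prop) (S : Set V) : Prop := geoHull A S = Set.univ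

def IsGeodeticSet (A : V → V → Prop) (S : Set V) : Prop := geoInterval A S = Set.univ

noncomputable def hullNumber (A : V → V → Prop) : ℕ :=
  sInf {n | ∃ S : Set V, S.Finite ∧ S.ncard = n ∧ IsHullSet A S}

noncomputable def geodeticNumber (A : V → V → Prop) : ℕ :=
  sInf {n | ∃ S : Set V, S.Finite ∧ S.ncard = n ∧ IsGeodeticSet A S}

def IsSource (A : V → V → Prop) (v : V) : Prop := ∀ u, ¬ A u v
def IsSink (A : V → V → Prop) (v : V) : Prop := ∀ w, ¬ A v w
def IsTransitiveVtx (A : V → V → Prop) (v : V) : Prop :=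
  (∃ u, A u v) ∧ (∃ w, A v w) ∧ ∀ u w, A u v → A v w → A u w
def IsExtremeVtx (A : V → V → Prop) (v : V) : Prop :=
  IsSource A v ∨ IsSink A v ∨ IsTransitiveVtx A v

/-- An oriented graph: an asymmetric (hence irreflexive) arc relation. -/
def Oriented (A : V → V → Prop) : Prop := ∀ u v, A u v → ¬ A v u

/-- Directed distance, `⊤` if there is no directed walk. -/
noncomputable def ddist (A : V → V → Prop) (u v : V) : ℕ∞ :=
  sInf {n : ℕ∞ | ∃ l, DiwalkFrom A u v l ∧ (l.length : ℕ∞) = n + 1}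


open Classical in
lemma witness_of_nonextreme (A : V → V → Prop) {v : V} (h : ¬ IsExtremeVtx A v) :
    ∃ u w, A u v ∧ A v w ∧ ¬ A u w := by
  simp only [IsExtremeVtx, IsSource, IsSink, IsTransitiveVtx, not_or] at h
  obtain ⟨h1, h2, h3⟩ := h
  push_neg at h1 h2
  obtain ⟨u, hu⟩ := h1
  obtain ⟨w, hw⟩ := h2
  by_contra hcon
  push_neg at hcon
  exact h3 ⟨⟨u, hu⟩, ⟨w, hw⟩, hcon⟩

lemma geodesic_of_witness (A : V → V → Prop) (hA : Oriented A) {u v w : V}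
    (h1 : A u v) (h2 : A v w) (h3 : ¬ A u w) :
    IsGeodesic A u w [u, v, w] := by
  have huw : u ≠ w := fun h => hA u v h1 (h ▸ h2)
  refine ⟨⟨by exact List.isChain_cons_cons.2 ⟨h1, List.isChain_cons_cons.2 ⟨h2, List.isChain_singleton w⟩⟩, rfl, rfl⟩, ?_⟩
  rintro l' ⟨hc, hh, hg⟩
  match l' with
  | [] => simp at hh
  | [x] =>
      simp only [List.head?_cons, Option.some_inj] at hh
      simp only [List.getLast?_singleton, Option.some_inj] at hg
      exact absurd (hh.symm.trans hg) huw
  | [x, y] =>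
      simp only [List.head?_cons, Option.some_inj] at hh
      have hg' : y = w := by simpa [List.getLast?] using hg
      have : A x y := (List.isChain_cons_cons.1 hc).1
      exact absurd (hh ▸ hg' ▸ this) h3
  | a :: b :: c :: t => simp [List.length]

lemma mem_interval_of_witness (A : V → V → Prop) (hA : Oriented A) {u v w : V} (T : Set V)
    (hu : u ∈ T) (hw : w ∈ T) (h1 : A u v) (h2 : A v w) (h3 : ¬ A u w) :
    v ∈ geoInterval A T :=
  Or.inr ⟨u, hu, w, hw, [u, v, w], geodesic_of_witness A hA h1 h2 h3, by simp⟩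

def Good (A : V → V → Prop) : List V → Prop
  | [] => True
  | v :: l => (∃ u w, A u v ∧ A v w ∧ ¬ A u w ∧ u ∉ (v :: l) ∧ w ∉ (v :: l)) ∧ Good A l

lemma good_hull (A : V → V → Prop) (hA : Oriented A) :
    ∀ L : List V, Good A L →
      ∀ T : Set V, GeoConvex A T → (∀ x, x ∉ L → x ∈ T) → ∀ x, x ∈ T
  | [], _, T, _, hsub, x => hsub x (by simp)
  | v :: l, ⟨⟨u, w, h1, h2, h3, hu, hw⟩, hg⟩, T, hconv, hsub, x => by
    have hv : v ∈ T := by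
      have := mem_interval_of_witness A hA T (hsub u hu) (hsub w hw) h1 h2 h3
      rwa [hconv] at this
    refine good_hull A hA l hg T hconv (fun y hy => ?_) x
    by_cases h : y = v
    · exact h ▸ hv
    · exact hsub y (by simp [List.mem_cons, h, hy])

open Classical in
lemma greedy (A : V → V → Prop) (hA : Oriented A) (T : Finset V)
    (hT : ∀ v ∈ T, ¬ IsExtremeVtx A v) :
    ∃ L : List V, Good A L ∧ L.Nodup ∧ (∀ x ∈ L, x ∈ T) ∧ T.card ≤ 3 * L.length := by
  induction T using Finset.strongInduction with
  | _ T ih =>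
    by_cases hT0 : T = ∅
    · exact ⟨[], trivial, List.nodup_nil, by simp [hT0], by simp [hT0]⟩
    · obtain ⟨v, hv⟩ := Finset.nonempty_iff_ne_empty.2 hT0
      obtain ⟨u, w, h1, h2, h3⟩ := witness_of_nonextreme A (hT v hv)
      have huv : u ≠ v := fun h => hA u v h1 (h ▸ h1)
      have hwv : w ≠ v := fun h => hA v w h2 (h ▸ h2)
      set T' := T \ {v, u, w} with hT'def
      have hsub : T' ⊂ T := by
        refine Finset.ssubset_iff_of_subset (Finset.sdiff_subset) |>.2 ⟨v, hv, ?_⟩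
        simp [hT'def]
      obtain ⟨L', hgood, hnd, hmem, hcard⟩ :=
        ih T' hsub (fun x hx => hT x (Finset.mem_sdiff.1 hx).1)
      have hvT' : v ∉ T' := by simp [hT'def]
      have huT' : u ∉ T' := by simp [hT'def]
      have hwT' : w ∉ T' := by simp [hT'def]
      refine ⟨v :: L', ⟨⟨u, w, h1, h2, h3, ?_, ?_⟩, hgood⟩, ?_, ?_, ?_⟩
      · simp only [List.mem_cons, not_or]
        exact ⟨huv, fun h => huT' (hmem u h)⟩
      · simp only [List.mem_cons, not_or]
        exact ⟨hwv, fun h => hwT' (hmem w h)⟩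
      · exact List.nodup_cons.2 ⟨fun h => hvT' (hmem v h), hnd⟩
      · intro x hx
        rcases List.mem_cons.1 hx with h | h
        · exact h ▸ hv
        · exact Finset.mem_sdiff.1 (hmem x h) |>.1
      · have : T ⊆ T' ∪ {v, u, w} := by
          intro x hx
          by_cases h : x ∈ ({v, u, w} : Finset V)
          · exact Finset.mem_union_right _ h
          · exact Finset.mem_union_left _ (Finset.mem_sdiff.2 ⟨hx, h⟩)
        calc T.card ≤ (T' ∪ {v, u, w}).card := Finset.card_le_card this
          _ ≤ T'.card + ({v, u, w} : Finset V).card := Finset.card_union_le _ _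
          _ ≤ 3 * L'.length + 3 := by
              have hc3 : ({v, u, w} : Finset V).card ≤ 3 := by
                calc ({v, u, w} : Finset V).card
                    ≤ ({u, w} : Finset V).card + 1 := Finset.card_insert_le _ _
                  _ ≤ (({w} : Finset V).card + 1) + 1 :=
                      Nat.add_le_add_right (Finset.card_insert_le _ _) 1
                  _ = 3 := by simp
              omega
          _ = 3 * (v :: L').length := by simp [List.length_cons]; ring

/-- for every finite oriented graph `D`,
`ohn(D) ≤ |ext(D)| + (2/3)·|V(D) \ ext(D)|`. -/
theorem stmt_0 [Fintype V] (A : V → V → Prop) (hA : Oriented A) :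
    (hullNumber A : ℚ) ≤ ({v | IsExtremeVtx A v} : Set V).ncard
      + (2/3 : ℚ) * ({v | ¬ IsExtremeVtx A v} : Set V).ncard := by
  classical
  set NE : Set V := {v | ¬ IsExtremeVtx A v} with hNEdef
  have hNEfin : NE.Finite := Set.toFinite _
  obtain ⟨L, hgood, hnd, hmem, hcard⟩ := greedy A hA hNEfin.toFinset
    (fun v hv => by simpa [hNEdef] using (Set.Finite.mem_toFinset hNEfin).1 hv)
  set S : Set V := {x | x ∉ L} with hSdef
  have hhull : IsHullSet A S := by
    apply Set.eq_univ_of_forall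
    intro x
    apply Set.mem_sInter.2
    rintro T ⟨hST, hconv⟩
    exact good_hull A hA L hgood T hconv (fun y hy => hST hy) x
  have hk : hullNumber A ≤ S.ncard := Nat.sInf_le ⟨S, Set.toFinite _, rfl, hhull⟩
  have hScard : S.ncard = Fintype.card V - L.length := by
    have hS : S = (↑(L.toFinsetᶜ) : Set V) := by ext x; simp [hSdef]
    rw [hS, Set.ncard_coe_finset, Finset.card_compl, List.toFinset_card_of_nodup hnd]
  set e := ({v | IsExtremeVtx A v} : Set V).ncard with hedef
  set m := NE.ncard with hmdef
  have hem : e + m = Fintype.card V := by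
    have hc : NE = {v | IsExtremeVtx A v}ᶜ := by ext y; simp [hNEdef]
    rw [hedef, hmdef, hc]
    rw [← Nat.card_eq_fintype_card]
    exact Set.ncard_add_ncard_compl ({v | IsExtremeVtx A v})
  have hm3 : m ≤ 3 * L.length := by
    rw [hmdef, Set.ncard_eq_toFinset_card NE hNEfin]
    exact hcard
  have hlen : L.length ≤ Fintype.card V := by
    rw [← List.toFinset_card_of_nodup hnd]
    exact Finset.card_le_univ _
  have h1 : (hullNumber A : ℚ) ≤ (Fintype.card V : ℚ) - L.length := by
    have h0 : hullNumber A ≤ Fintype.card V - L.length := hk.trans_eq hScard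
    calc (hullNumber A : ℚ) ≤ ((Fintype.card V - L.length : ℕ) : ℚ) := by exact_mod_cast h0
      _ = (Fintype.card V : ℚ) - L.length := by rw [Nat.cast_sub hlen]
  have hem' : (e : ℚ) + m = Fintype.card V := by exact_mod_cast hem
  have hm3' : (m : ℚ) ≤ 3 * L.length := by exact_mod_cast hm3
  linarith
end

section
/- For every positive integer k, there exists a tournament D on n = 3k vertices with no extreme vertices such that ohn(D) = (2/3)n. In particular, D can be taken to be the lexicographic product of the transitive tournament on k vertices with the directed 3-cycle. -/
variable {V : Type*}

/-- The lexicographic product of the transitive tournament on `Fin k`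
with the directed 3-cycle (on `Fin 3`, arcs `a → a+1`). -/
def lexC3 (k : ℕ) (p q : Fin k × Fin 3) : Prop :=
  p.1 < q.1 ∨ (p.1 = q.1 ∧ q.2 = p.2 + 1)

lemma lex_fst_le {k : ℕ} {p q : Fin k × Fin 3} (h : lexC3 k p q) : p.1 ≤ q.1 := by
  rcases h with h | ⟨h, _⟩
  · exact h.le
  · exact h.le

lemma walk_fst_le {k : ℕ} : ∀ {l : List (Fin k × Fin 3)} {u v : Fin k × Fin 3},
    DiwalkFrom (lexC3 k) u v l → u.1 ≤ v.1 := by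
  intro l
  induction l with
  | nil => intro u v h; simp [DiwalkFrom] at h
  | cons x t ih =>
    intro u v ⟨hc, hh, hl⟩
    simp at hh; subst hh
    cases t with
    | nil => simp at hl; subst hl; exact le_refl _
    | cons y t' =>
      simp only [List.Chain', List.isChain_cons_cons] at hc
      have h1 : x.1 ≤ y.1 := lex_fst_le hc.1
      have h2 : y.1 ≤ v.1 := ih ⟨hc.2, rfl, by simpa using hl⟩
      exact h1.trans h2

lemma walk_len3 {A : V → V → Prop} {u v : V} {l : List V}
    (hw : DiwalkFrom A u v l) (hne : u ≠ v) (hna : ¬ A u v) : 3 ≤ l.length := by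
  obtain ⟨hc, hh, hl⟩ := hw
  cases l with
  | nil => simp at hh
  | cons x t =>
    simp at hh; subst hh
    cases t with
    | nil => simp at hl; subst hl; exact absurd rfl hne
    | cons y t' =>
      cases t' with
      | nil =>
        simp at hl; subst hl
        simp only [List.Chain', List.isChain_cons_cons] at hc
        exact absurd hc.1 hna
      | cons z t'' => simp only [List.length_cons]; omega

lemma no_arc_char {k : ℕ} {u v : Fin k × Fin 3} (hne : u ≠ v) (hna : ¬ lexC3 k u v)
    (hle : u.1 ≤ v.1) : u.1 = v.1 ∧ v.2 = u.2 + 2 := by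
  have h1 : u.1 = v.1 := by
    rcases lt_or_eq_of_le hle with h | h
    · exact absurd (Or.inl h) hna
    · exact h
  refine ⟨h1, ?_⟩
  have h2 : v.2 ≠ u.2 + 1 := fun h => hna (Or.inr ⟨h1, h⟩)
  have h3 : v.2 ≠ u.2 := fun h => hne (Prod.ext h1 h.symm)
  revert h2 h3
  have : ∀ a b : Fin 3, b ≠ a + 1 → b ≠ a → b = a + 2 := by decide
  exact this u.2 v.2

lemma geo_mem_cases {k : ℕ} {u v w : Fin k × Fin 3} {l : List (Fin k × Fin 3)}
    (hg : IsGeodesic (lexC3 k) u v l) (hw : w ∈ l) :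
    w = u ∨ w = v ∨ (u ≠ v ∧ u.1 = v.1 ∧ w.1 = u.1) := by
  obtain ⟨hwalk, hmin⟩ := hg
  by_cases hne : u = v
  · subst hne
    have h1 : l.length ≤ 1 := hmin [u] ⟨by simp [List.Chain'], by simp, by simp⟩
    obtain ⟨hc, hh, hl⟩ := hwalk
    cases l with
    | nil => simp at hh
    | cons x t =>
      cases t with
      | nil => simp at hh; subst hh; simp at hw; exact Or.inl hw
      | cons y t' => simp at h1
  · by_cases ha : lexC3 k u v
    · have h2 : l.length ≤ 2 := hmin [u, v] ⟨by simp [List.Chain', ha], by simp, by simp⟩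
      obtain ⟨hc, hh, hl⟩ := hwalk
      cases l with
      | nil => simp at hh
      | cons x t =>
        simp at hh; subst hh
        cases t with
        | nil => simp at hl; subst hl; exact absurd rfl hne
        | cons y t' =>
          cases t' with
          | nil =>
            simp at hl; subst hl
            simp at hw
            rcases hw with h | h
            · exact Or.inl h
            · exact Or.inr (Or.inl h)
          | cons z t'' => simp only [List.length_cons] at h2; omega
    · have hle : u.1 ≤ v.1 := walk_fst_le hwalk
      obtain ⟨h1, h2⟩ := no_arc_char hne ha hle
      have hm1 : lexC3 k u (u.1, u.2 + 1) := Or.inr ⟨rfl, rfl⟩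
      have hm2 : lexC3 k (u.1, u.2 + 1) v := by
        refine Or.inr ⟨h1, ?_⟩
        simp only [h2]
        have : ∀ a : Fin 3, a + 2 = a + 1 + 1 := by decide
        exact this u.2
      have h3 : l.length ≤ 3 :=
        hmin [u, (u.1, u.2 + 1), v] ⟨by simp [List.Chain', hm1, hm2], by simp, by simp⟩
      have h4 : 3 ≤ l.length := walk_len3 hwalk hne ha
      obtain ⟨hc, hh, hl⟩ := hwalk
      cases l with
      | nil => simp at hh
      | cons x t =>
        simp at hh; subst hh
        cases t with
        | nil => simp at h4
        | cons y t' =>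
          cases t' with
          | nil => simp at h4
          | cons z t'' =>
            cases t'' with
            | cons a t''' => simp only [List.length_cons] at h3; omega
            | nil =>
              simp at hl; subst hl
              simp [List.Chain', List.isChain_cons_cons] at hc
              have hy1 : y.1 = x.1 :=
                le_antisymm (h1 ▸ lex_fst_le hc.2) (lex_fst_le hc.1)
              simp at hw
              rcases hw with h | h | h
              · exact Or.inl h
              · exact Or.inr (Or.inr ⟨hne, h1, by rw [h, hy1]⟩)
              · exact Or.inr (Or.inl h)


lemma fin3_facts : (∀ a : Fin 3, a ≠ a + 2) ∧ (∀ a : Fin 3, a + 2 ≠ a + 1) ∧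
    (∀ a : Fin 3, a + 2 = a + 1 + 1) := by decide

lemma geo_cycle {k : ℕ} (i : Fin k) (a : Fin 3) :
    IsGeodesic (lexC3 k) (i, a) (i, a + 2) [(i, a), (i, a + 1), (i, a + 2)] := by
  constructor
  · refine ⟨?_, by simp, by simp⟩
    simp only [List.Chain', List.isChain_cons_cons, List.isChain_singleton, and_true]
    exact ⟨Or.inr ⟨rfl, rfl⟩, Or.inr ⟨rfl, fin3_facts.2.2 a⟩⟩
  · intro l' hl'
    have hne : ((i, a) : Fin k × Fin 3) ≠ (i, a + 2) := by
      intro h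
      exact fin3_facts.1 a (congrArg Prod.snd h)
    have hna : ¬ lexC3 k (i, a) (i, a + 2) := by
      rintro (h | ⟨-, h⟩)
      · exact lt_irrefl _ h
      · exact fin3_facts.2.1 a (by simpa using h)
    simpa using walk_len3 hl' hne hna

lemma block_in_convex {k : ℕ} {T : Set (Fin k × Fin 3)} (hT : GeoConvex (lexC3 k) T)
    {i : Fin k} {a b : Fin 3} (ha : (i, a) ∈ T) (hb : (i, b) ∈ T) (hab : a ≠ b) :
    ∀ c : Fin 3, (i, c) ∈ T := by
  -- from two distinct vertices in a block, the whole block is in T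
  have key : ∀ x : Fin 3, (i, x) ∈ T → (i, x + 2) ∈ T → (i, x + 1) ∈ T := by
    intro x hx hx2
    have : (i, x + 1) ∈ geoInterval (lexC3 k) T :=
      Or.inr ⟨(i, x), hx, (i, x + 2), hx2, _, geo_cycle i x, by simp⟩
    rwa [hT] at this
  have hb' : b = a + 1 ∨ b = a + 2 := by
    revert hab; revert hb; revert ha
    have : ∀ a b : Fin 3, a ≠ b → b = a + 1 ∨ b = a + 2 := by decide
    intro _ _ h; exact this a b h
  intro c
  have hcase : ∀ x : Fin 3, (i, x) ∈ T → (i, x + 1) ∈ T → ∀ c, (i, c) ∈ T := by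
    intro x hx hx1 c
    have h2 : (i, x + 2) ∈ T := by
      have := key (x + 1) hx1 (by rwa [(by decide : ∀ x : Fin 3, x + 1 + 2 = x) x])
      rwa [(by decide : ∀ x : Fin 3, x + 1 + 1 = x + 2) x] at this
    have : c = x ∨ c = x + 1 ∨ c = x + 2 :=
      (by decide : ∀ x c : Fin 3, c = x ∨ c = x + 1 ∨ c = x + 2) x c
    rcases this with rfl | rfl | rfl
    · exact hx
    · exact hx1
    · exact h2
  rcases hb' with rfl | rfl
  · exact hcase a ha hb c
  · have h1 : (i, a + 1) ∈ T := key a ha hb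
    exact hcase a ha h1 c

lemma two_in_block {k : ℕ} {S : Set (Fin k × Fin 3)} (hS : IsHullSet (lexC3 k) S)
    (i : Fin k) : ∃ p q : Fin k × Fin 3, p ∈ S ∧ q ∈ S ∧ p ≠ q ∧ p.1 = i ∧ q.1 = i := by
  by_contra hcon
  push_neg at hcon
  have hsub : ∀ p q : Fin k × Fin 3, p ∈ S → q ∈ S → p.1 = i → q.1 = i → p = q := by
    intro p q hp hq hpi hqi
    by_contra hne
    exact absurd hqi (hcon p q hp hq hne hpi)
  set T : Set (Fin k × Fin 3) := {p | p.1 ≠ i ∨ p ∈ S} with hTdef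
  have hST : S ⊆ T := fun p hp => Or.inr hp
  have hconv : GeoConvex (lexC3 k) T := by
    apply Set.Subset.antisymm
    · rintro w (hw | ⟨u, hu, v, hv, l, hg, hwl⟩)
      · exact hw
      · rcases geo_mem_cases hg hwl with rfl | rfl | ⟨hne, huv, hwu⟩
        · exact hu
        · exact hv
        · by_cases hui : u.1 = i
          · rcases hu with h | h
            · exact absurd hui h
            · rcases hv with h' | h'
              · exact absurd (huv ▸ hui) h'
              · exact absurd (hsub u v h h' hui (huv ▸ hui)) hne
          · exact Or.inl (hwu ▸ hui)
    · exact fun w hw => Or.inl hw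
  have hTuniv : T = Set.univ := by
    have : geoHull (lexC3 k) S ⊆ T := Set.sInter_subset_of_mem ⟨hST, hconv⟩
    rw [hS] at this
    exact Set.eq_univ_of_univ_subset this
  -- find a vertex of block i not in S
  have hmiss : ∃ a : Fin 3, (i, a) ∉ S := by
    by_contra hall
    push_neg at hall
    have h01 : ((i, (0 : Fin 3)) : Fin k × Fin 3) = (i, 1) :=
      hsub _ _ (hall 0) (hall 1) rfl rfl
    have := congrArg Prod.snd h01
    simp at this
  obtain ⟨a, ha⟩ := hmiss
  have : (i, a) ∈ T := hTuniv ▸ Set.mem_univ _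
  rcases this with h | h
  · exact h rfl
  · exact ha h

lemma card_lower {k : ℕ} {S : Set (Fin k × Fin 3)} (hfin : S.Finite)
    (hS : IsHullSet (lexC3 k) S) : 2 * k ≤ S.ncard := by
  classical
  set F := hfin.toFinset with hF
  have hcard : S.ncard = F.card := (Set.ncard_eq_toFinset_card S hfin)
  rw [hcard]
  have hfib : ∀ i : Fin k, 2 ≤ (F.filter (fun p => p.1 = i)).card := by
    intro i
    obtain ⟨p, q, hp, hq, hne, hpi, hqi⟩ := two_in_block hS i
    refine Finset.one_lt_card.mpr ⟨p, ?_, q, ?_, hne⟩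
    · exact Finset.mem_filter.mpr ⟨hfin.mem_toFinset.mpr hp, hpi⟩
    · exact Finset.mem_filter.mpr ⟨hfin.mem_toFinset.mpr hq, hqi⟩
  have hsum : F.card = ∑ i : Fin k, (F.filter (fun p => p.1 = i)).card :=
    Finset.card_eq_sum_card_fiberwise (fun p _ => Finset.mem_univ p.1)
  rw [hsum]
  calc 2 * k = ∑ _i : Fin k, 2 := by simp [mul_comm]
    _ ≤ ∑ i : Fin k, (F.filter (fun p => p.1 = i)).card :=
        Finset.sum_le_sum (fun i _ => hfib i)

lemma upper_set_hull {k : ℕ} :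
    IsHullSet (lexC3 k)
      ((Finset.univ ×ˢ ({0, 1} : Finset (Fin 3)) : Finset (Fin k × Fin 3)) :
        Set (Fin k × Fin 3)) := by
  classical
  set S : Set (Fin k × Fin 3) :=
    ((Finset.univ ×ˢ ({0, 1} : Finset (Fin 3)) : Finset (Fin k × Fin 3)) :
      Set (Fin k × Fin 3)) with hSdef
  have hmem : ∀ i : Fin k, ((i, (0 : Fin 3)) ∈ S) ∧ ((i, (1 : Fin 3)) ∈ S) := by
    intro i
    constructor <;> simp [hSdef]
  apply Set.eq_univ_of_forall
  intro p
  rw [geoHull, Set.mem_sInter]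
  rintro T ⟨hST, hconv⟩
  obtain ⟨i, a⟩ := p
  exact block_in_convex hconv (hST (hmem i).1) (hST (hmem i).2) (by decide) a

/-- for every `k > 0` there is a tournament on `n = 3k` vertices
without extreme vertices whose hull number is `(2/3)n = 2k`; namely the
lexicographic product of the transitive tournament on `k` vertices with `C3`. -/
theorem stmt_3 (k : ℕ) (hk : 0 < k) :
    Oriented (lexC3 k) ∧
    (∀ p q : Fin k × Fin 3, p ≠ q → lexC3 k p q ∨ lexC3 k q p) ∧
    (∀ v, ¬ IsExtremeVtx (lexC3 k) v) ∧
    hullNumber (lexC3 k) = 2 * k := by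
  classical
  refine ⟨?_, ?_, ?_, ?_⟩
  · -- Oriented
    rintro u v (h | ⟨h1, h2⟩) (h' | ⟨h1', h2'⟩)
    · exact absurd h' (lt_asymm h)
    · exact absurd h (h1' ▸ lt_irrefl _)
    · exact absurd h' (h1 ▸ lt_irrefl _)
    · rw [h2'] at h2
      exact (by decide : ∀ a : Fin 3, a ≠ a + 1 + 1) v.2 h2
  · -- tournament
    intro p q hpq
    rcases lt_trichotomy p.1 q.1 with h | h | h
    · exact Or.inl (Or.inl h)
    · have hs : p.2 ≠ q.2 := fun hc => hpq (Prod.ext h hc)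
      have : q.2 = p.2 + 1 ∨ p.2 = q.2 + 1 := by
        revert hs
        have : ∀ a b : Fin 3, a ≠ b → b = a + 1 ∨ a = b + 1 := by decide
        exact this p.2 q.2
      rcases this with h' | h'
      · exact Or.inl (Or.inr ⟨h, h'⟩)
      · exact Or.inr (Or.inr ⟨h.symm, h'⟩)
    · exact Or.inr (Or.inl h)
  · -- no extreme vertices
    rintro ⟨i, a⟩ (hsrc | hsnk | ⟨-, -, htr⟩)
    · exact hsrc (i, a + 2) (Or.inr ⟨rfl, by simp [(by decide : ∀ a : Fin 3, a + 2 + 1 = a) a]⟩)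
    · exact hsnk (i, a + 1) (Or.inr ⟨rfl, rfl⟩)
    · have h1 : lexC3 k (i, a + 2) (i, a) :=
        Or.inr ⟨rfl, by simp [(by decide : ∀ a : Fin 3, a + 2 + 1 = a) a]⟩
      have h2 : lexC3 k (i, a) (i, a + 1) := Or.inr ⟨rfl, rfl⟩
      rcases htr _ _ h1 h2 with h | ⟨-, h⟩
      · exact lt_irrefl _ h
      · exact (by decide : ∀ a : Fin 3, a + 1 ≠ a + 2 + 1) a h
  · -- hull number
    have hmemM : 2 * k ∈ {n | ∃ S : Set (Fin k × Fin 3), S.Finite ∧ S.ncard = n ∧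
        IsHullSet (lexC3 k) S} := by
      refine ⟨((Finset.univ ×ˢ ({0, 1} : Finset (Fin 3)) : Finset (Fin k × Fin 3)) :
          Set (Fin k × Fin 3)), Finset.finite_toSet _, ?_, upper_set_hull⟩
      rw [Set.ncard_coe_finset, Finset.card_product]
      simp [mul_comm]
    apply le_antisymm
    · exact Nat.sInf_le hmemM
    · apply le_csInf ⟨2 * k, hmemM⟩
      rintro n ⟨S, hfin, rfl, hS⟩
      exact card_lower hfin hS
end

section
/- Let G be a graph and G→C4 the oriented graph obtained from G by replacing each edge v_i v_j with a directed 4-cycle (v_i, v_{i,j}, v_j, v_{j,i}). Then for all vertices v_i, v_j of G, d_{G→C4}(v_i, v_j) = d_{G→C4}(v_j, v_i) = 2·d_G(v_i, v_j). -/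
variable {V : Type*}

/-- Vertex set of `G→C4`: original vertices plus one vertex `v_{i,j}` per ordered adjacent pair. -/
abbrev oC4V {V : Type*} (G : SimpleGraph V) := V ⊕ {p : V × V // G.Adj p.1 p.2}

/-- `G→C4`: each edge `v_i v_j` of `G` replaced by the directed 4-cycle
`(v_i, v_{i,j}, v_j, v_{j,i})`. -/
def oC4 {V : Type*} (G : SimpleGraph V) : oC4V G → oC4V G → Prop
  | Sum.inl i, Sum.inr p => i = p.1.1
  | Sum.inr p, Sum.inl j => j = p.1.2
  | _, _ => False

lemma liftA (G : SimpleGraph V) :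
    ∀ (l : List V), l.Chain' G.Adj → l ≠ [] →
    ∃ l' : List (oC4V G), l'.Chain' (oC4 G) ∧ l'.head? = l.head?.map Sum.inl ∧
      l'.getLast? = l.getLast?.map Sum.inl ∧ l'.length + 1 = 2 * l.length
  | [], _, h => absurd rfl h
  | [a], _, _ => ⟨[Sum.inl a], by simp [List.Chain', List.isChain_singleton], by simp, by simp, by simp⟩
  | a :: b :: rest, hc, _ => by
    unfold List.Chain' at hc; rw [List.isChain_cons_cons] at hc
    obtain ⟨hab, hc'⟩ := hc
    obtain ⟨l', h1, h2, h3, h4⟩ := liftA G (b :: rest) hc' (by simp)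
    rcases l' with _ | ⟨x, t⟩
    · simp at h2
    have hx : x = Sum.inl b := by simpa using h2
    subst hx
    refine ⟨Sum.inl a :: Sum.inr ⟨(a, b), hab⟩ :: Sum.inl b :: t, ?_, by simp, ?_, ?_⟩
    · exact List.isChain_cons_cons.2 ⟨rfl, List.isChain_cons_cons.2 ⟨rfl, h1⟩⟩
    · rw [List.getLast?_cons_cons, List.getLast?_cons_cons, h3]
      rw [List.getLast?_cons_cons]
    · simp only [List.length_cons] at h4 ⊢
      omega

lemma liftB (G : SimpleGraph V) :
    ∀ (n : ℕ) (l' : List (oC4V G)) (i j : V), l'.length = n → l'.Chain' (oC4 G) →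
    l'.head? = some (Sum.inl i) → l'.getLast? = some (Sum.inl j) →
    ∃ l : List V, DiwalkFrom G.Adj i j l ∧ 2 * l.length = l'.length + 1 := by
  intro n
  induction n using Nat.strong_induction_on with
  | _ n ih =>
    intro l' i j hn hc hh hl
    rcases l' with _ | ⟨x, _ | ⟨y, rest⟩⟩
    · simp at hh
    · obtain rfl : x = Sum.inl i := by simpa using hh
      obtain hij : (Sum.inl i : oC4V G) = Sum.inl j := by simpa using hl
      obtain rfl : i = j := by simpa using hij
      exact ⟨[i], ⟨by simp [List.Chain', List.isChain_singleton], by simp, by simp⟩, by simp⟩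
    · obtain rfl : x = Sum.inl i := by simpa using hh
      unfold List.Chain' at hc; rw [List.isChain_cons_cons] at hc
      obtain ⟨hxy, hc'⟩ := hc
      rcases y with yv | p
      · exact absurd hxy (by simp [oC4])
      obtain rfl : i = p.1.1 := hxy
      rcases rest with _ | ⟨z, rest'⟩
      · simp [List.getLast?] at hl
      · rw [List.isChain_cons_cons] at hc'
        obtain ⟨hyz, hc''⟩ := hc'
        rcases z with zv | q
        swap
        · exact absurd hyz (by simp [oC4])
        obtain rfl : zv = p.1.2 := hyz
        have hl' : (Sum.inl p.1.2 :: rest' : List (oC4V G)).getLast? = some (Sum.inl j) := by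
          rw [← hl, List.getLast?_cons_cons, List.getLast?_cons_cons]
        obtain ⟨l, ⟨hlc, hlh, hll⟩, hlen⟩ :=
          ih (rest'.length + 1) (by simp only [List.length_cons] at hn; omega) (Sum.inl p.1.2 :: rest') p.1.2 j (by simp) hc''
            (by simp) hl'
        rcases l with _ | ⟨w, t⟩
        · simp at hlh
        obtain rfl : w = p.1.2 := by simpa using hlh
        refine ⟨p.1.1 :: p.1.2 :: t, ⟨List.isChain_cons_cons.2 ⟨p.2, hlc⟩, by simp, ?_⟩, ?_⟩
        · rw [List.getLast?_cons_cons]; exact hll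
        · simp only [List.length_cons] at hlen ⊢
          omega

lemma ddist_symm (G : SimpleGraph V) (i j : V) : ddist G.Adj i j = ddist G.Adj j i := by
  unfold ddist
  congr 1
  ext n
  constructor <;> rintro ⟨l, ⟨hc, hh, hl⟩, hlen⟩ <;>
    refine ⟨l.reverse, ⟨?_, by simpa using hl, by simpa using hh⟩, by simpa using hlen⟩ <;>
    · unfold List.Chain' at hc ⊢; rw [List.isChain_reverse]
      exact hc.imp fun a b h => G.adj_symm h

lemma key (G : SimpleGraph V) (i j : V) :
    ddist (oC4 G) (Sum.inl i) (Sum.inl j) = 2 * ddist G.Adj i j := by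
  apply le_antisymm
  · rcases eq_or_ne (ddist G.Adj i j) ⊤ with h | h
    · rw [h]; simp
    · have hne : {n : ℕ∞ | ∃ l, DiwalkFrom G.Adj i j l ∧ (l.length : ℕ∞) = n + 1}.Nonempty := by
        by_contra hc
        rw [Set.not_nonempty_iff_eq_empty] at hc
        exact h (by simp [ddist, hc])
      have hmem : ddist G.Adj i j ∈ _ := csInf_mem hne
      obtain ⟨l, ⟨hc, hh, hl⟩, hlen⟩ := hmem
      obtain ⟨l', h1, h2, h3, h4⟩ := liftA G l hc (by rintro rfl; simp at hh)
      lift ddist G.Adj i j to ℕ using h with d hd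
      have hld : l.length = d + 1 := by exact_mod_cast hlen
      apply sInf_le
      refine ⟨l', ⟨h1, by rw [h2, hh]; rfl, by rw [h3, hl]; rfl⟩, ?_⟩
      have : l'.length = 2 * d + 1 := by omega
      rw [this]
      push_cast
      ring
  · apply le_sInf
    rintro m ⟨l', ⟨hc, hh, hl⟩, hlen⟩
    obtain ⟨l, hdw, h2⟩ := liftB G l'.length l' i j rfl hc hh hl
    have hm : m ≠ ⊤ := by
      rintro rfl
      rw [top_add] at hlen
      exact (ENat.coe_ne_top _) hlen
    lift m to ℕ using hm with mn
    have hlm : l'.length = mn + 1 := by exact_mod_cast hlen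
    have hl1 : 1 ≤ l.length := by omega
    have hk : l.length = (l.length - 1) + 1 := by omega
    have hdle : ddist G.Adj i j ≤ (l.length - 1 : ℕ) := by
      apply sInf_le
      exact ⟨l, hdw, by rw [hk]; push_cast; ring⟩
    calc 2 * ddist G.Adj i j ≤ 2 * ((l.length - 1 : ℕ) : ℕ∞) := by
          exact mul_le_mul_right hdle 2
      _ = (mn : ℕ∞) := by
          rw [← Nat.cast_ofNat, ← Nat.cast_mul]
          congr 1
          omega


/-- distances between original vertices in `G→C4` are twice the
undirected distances in `G`, in both directions. -/
theorem stmt_6 (G : SimpleGraph V) (i j : V) :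
    ddist (oC4 G) (Sum.inl i) (Sum.inl j) = 2 * ddist G.Adj i j ∧
    ddist (oC4 G) (Sum.inl j) (Sum.inl i) = 2 * ddist G.Adj i j := by
  exact ⟨key G i j, by rw [key G j i, ddist_symm G j i]⟩
end

section
/- For any graph G, the hull number of the oriented graph G→C4 is at most the hull number of G; in fact every hull set of G is a hull set of G→C4. -/
variable {V : Type*}

open Classical in
noncomputable def ee (G : SimpleGraph V) (a b : V) : oC4V G :=
  if h : G.Adj a b then Sum.inr ⟨(a,b), h⟩ else Sum.inl a

noncomputable def expand (G : SimpleGraph V) : List V → List (oC4V G)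
  | [] => []
  | [a] => [Sum.inl a]
  | a :: b :: t => Sum.inl a :: ee G a b :: expand G (b :: t)

lemma expand_eq_cons (G : SimpleGraph V) (a : V) (t : List V) :
    ∃ r, expand G (a :: t) = Sum.inl a :: r := by
  cases t <;> exact ⟨_, rfl⟩

lemma expand_head? (G : SimpleGraph V) (a : V) (t : List V) :
    (expand G (a :: t)).head? = some (Sum.inl a) := by
  obtain ⟨r, hr⟩ := expand_eq_cons G a t
  rw [hr]; rfl

lemma expand_getLast? (G : SimpleGraph V) : ∀ l : List V,
    (expand G l).getLast? = l.getLast?.map Sum.inl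
  | [] => rfl
  | [a] => rfl
  | a :: b :: t => by
    obtain ⟨r, hr⟩ := expand_eq_cons G b t
    rw [expand, hr, List.getLast?_cons_cons, List.getLast?_cons_cons, ← hr,
      expand_getLast? G (b :: t), List.getLast?_cons_cons]

lemma expand_length (G : SimpleGraph V) : ∀ l : List V,
    (expand G l).length = 2 * l.length - 1
  | [] => rfl
  | [a] => rfl
  | a :: b :: t => by
    have := expand_length G (b :: t)
    simp only [expand, List.length_cons] at *
    omega

lemma expand_chain (G : SimpleGraph V) : ∀ l : List V, l.Chain' G.Adj →
    (expand G l).Chain' (oC4 G)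
  | [] , _ => List.isChain_nil
  | [a], _ => List.isChain_singleton _
  | a :: b :: t, h => by
    obtain ⟨hab, ht⟩ := List.isChain_cons_cons.mp h
    have ih := expand_chain G (b :: t) ht
    rw [expand, List.Chain', List.isChain_cons_cons, List.isChain_cons]
    refine ⟨?_, ?_, ih⟩
    · simp [ee, hab, oC4]
    · intro y hy
      rw [expand_head? G b t] at hy
      cases hy
      simp [ee, hab, oC4]

lemma expand_mem (G : SimpleGraph V) : ∀ l : List V, ∀ w ∈ l, Sum.inl w ∈ expand G l
  | [], w, hw => absurd hw List.not_mem_nil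
  | [a], w, hw => by simpa [expand] using hw
  | a :: b :: t, w, hw => by
    rcases List.mem_cons.mp hw with rfl | hw
    · simp [expand]
    · have := expand_mem G (b :: t) w hw
      simp only [expand, List.mem_cons] at this ⊢
      tauto

lemma expand_diwalk (G : SimpleGraph V) (u v : V) (l : List V)
    (h : DiwalkFrom G.Adj u v l) :
    DiwalkFrom (oC4 G) (Sum.inl u) (Sum.inl v) (expand G l) := by
  obtain ⟨hc, hh, hl⟩ := h
  refine ⟨expand_chain G l hc, ?_, ?_⟩
  · cases l with
    | nil => simp at hh
    | cons a t =>
      rw [List.head?_cons, Option.some_inj] at hh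
      subst hh
      exact expand_head? G a t
  · rw [expand_getLast? G l, hl]; rfl

lemma diwalk_structure (G : SimpleGraph V) : ∀ (n : ℕ) (l : List (oC4V G)), l.length ≤ n →
    ∀ u v : V, DiwalkFrom (oC4 G) (Sum.inl u) (Sum.inl v) l →
    ∃ m, DiwalkFrom G.Adj u v m ∧ l = expand G m := by
  intro n
  induction n with
  | zero =>
    rintro l hn u v ⟨hc, hh, hl⟩
    rw [List.length_eq_zero_iff.mp (Nat.le_zero.mp hn)] at hh
    simp at hh
  | succ n ih =>
    rintro l hn u v ⟨hc, hh, hl⟩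
    cases l with
    | nil => simp at hh
    | cons x rest =>
      rw [List.head?_cons, Option.some_inj] at hh
      subst hh
      cases rest with
      | nil =>
        simp only [List.getLast?_singleton, Option.some_inj, Sum.inl.injEq] at hl
        subst hl
        exact ⟨[u], ⟨List.isChain_singleton u, rfl, rfl⟩, rfl⟩
      | cons y rest' =>
        have h1 : oC4 G (Sum.inl u) y := (List.isChain_cons_cons.mp hc).1
        cases y with
        | inl c => simp [oC4] at h1
        | inr p =>
          have hu : u = p.1.1 := h1
          cases rest' with
          | nil =>
            rw [List.getLast?_cons_cons, List.getLast?_singleton] at hl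
            simp at hl
          | cons z rest'' =>
            have h2 : oC4 G (Sum.inr p) z :=
              (List.isChain_cons_cons.mp (List.isChain_cons_cons.mp hc).2).1
            cases z with
            | inr q => simp [oC4] at h2
            | inl b =>
              have hb : b = p.1.2 := h2
              have hadj : G.Adj u b := hu ▸ hb ▸ p.2
              have hrec : DiwalkFrom (oC4 G) (Sum.inl b) (Sum.inl v)
                  (Sum.inl b :: rest'') := by
                refine ⟨(List.isChain_cons_cons.mp (List.isChain_cons_cons.mp hc).2).2, rfl, ?_⟩
                rw [List.getLast?_cons_cons, List.getLast?_cons_cons] at hl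
                cases rest'' with
                | nil => simpa using hl
                | cons w t => rw [List.getLast?_cons_cons] at hl ⊢; exact hl
              have hlen : (Sum.inl b :: rest'' : List (oC4V G)).length ≤ n := by
                simp only [List.length_cons] at hn ⊢; omega
              obtain ⟨m, hm, hme⟩ := ih _ hlen b v hrec
              cases m with
              | nil => have := hm.2.1; simp at this
              | cons c mt =>
                have hcb : c = b := by
                  have := hm.2.1; rw [List.head?_cons, Option.some_inj] at this
                  exact this
                subst hcb
                refine ⟨u :: c :: mt, ⟨List.isChain_cons_cons.mpr ⟨hadj, hm.1⟩, rfl, ?_⟩, ?_⟩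
                · rw [List.getLast?_cons_cons]; exact hm.2.2
                · rw [expand, ← hme]
                  have hee : ee G u c = Sum.inr p := by
                    rw [ee, dif_pos hadj]
                    congr 1
                    exact Subtype.ext (Prod.ext hu.symm hb.symm).symm
                  rw [hee]


lemma expand_geodesic (G : SimpleGraph V) (u v : V) (m : List V)
    (h : IsGeodesic G.Adj u v m) :
    IsGeodesic (oC4 G) (Sum.inl u) (Sum.inl v) (expand G m) := by
  refine ⟨expand_diwalk G u v m h.1, ?_⟩
  intro l' hl'
  obtain ⟨m', hm', rfl⟩ := diwalk_structure G l'.length l' le_rfl u v hl'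
  rw [expand_length, expand_length]
  have := h.2 m' hm'
  omega

lemma univ_isHullSet (A : V → V → Prop) : IsHullSet A (Set.univ : Set V) := by
  rw [IsHullSet, geoHull, Set.eq_univ_iff_forall]
  intro x
  rw [Set.mem_sInter]
  rintro T ⟨hT, -⟩
  exact hT trivial

lemma hull_image (G : SimpleGraph V) (S : Set V) (hS : IsHullSet G.Adj S) :
    IsHullSet (oC4 G) (Sum.inl '' S) := by
  rw [IsHullSet, geoHull, Set.eq_univ_iff_forall]
  intro x
  rw [Set.mem_sInter]
  rintro T ⟨hsub, hconv⟩
  have hinl : ∀ a : V, Sum.inl a ∈ T := by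
    have hT' : GeoConvex G.Adj {a | Sum.inl a ∈ T} := by
      rw [GeoConvex]
      apply Set.Subset.antisymm
      · rintro w (hw | ⟨u, hu, v, hv, m, hgm, hwm⟩)
        · exact hw
        · have hg := expand_geodesic G u v m hgm
          have hmem : Sum.inl w ∈ geoInterval (oC4 G) T :=
            Set.mem_union_right _
              ⟨Sum.inl u, hu, Sum.inl v, hv, expand G m, hg, expand_mem G m w hwm⟩
          rwa [hconv] at hmem
      · exact Set.subset_union_left
    have hsub' : S ⊆ {a | Sum.inl a ∈ T} := fun a ha => hsub ⟨a, ha, rfl⟩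
    intro a
    have ha : a ∈ geoHull G.Adj S := by rw [hS]; trivial
    have hmemT : {a | Sum.inl a ∈ T} ∈ {T | S ⊆ T ∧ GeoConvex G.Adj T} := ⟨hsub', hT'⟩
    rw [geoHull] at ha
    exact Set.sInter_subset_of_mem hmemT ha
  cases x with
  | inl a => exact hinl a
  | inr p =>
    have hadj : G.Adj p.1.1 p.1.2 := p.2
    have hg : IsGeodesic (oC4 G) (Sum.inl p.1.1) (Sum.inl p.1.2)
        [Sum.inl p.1.1, Sum.inr p, Sum.inl p.1.2] := by
      constructor
      · exact ⟨List.isChain_cons_cons.mpr ⟨rfl, List.isChain_cons_cons.mpr ⟨rfl, List.isChain_singleton _⟩⟩,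
          rfl, rfl⟩
      · intro l' hl'
        obtain ⟨m, hm, rfl⟩ := diwalk_structure G l'.length l' le_rfl _ _ hl'
        rw [expand_length]
        have h2 : 2 ≤ m.length := by
          cases m with
          | nil => have := hm.2.1; simp at this
          | cons c mt =>
            cases mt with
            | nil =>
              obtain ⟨-, h1, h2⟩ := hm
              rw [List.head?_cons, Option.some_inj] at h1
              rw [List.getLast?_singleton, Option.some_inj] at h2
              exact absurd (h1 ▸ h2 ▸ hadj) (G.irrefl)
            | cons d t => simp only [List.length_cons]; omega
        simp only [List.length_cons, List.length_nil]
        omega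
    have hmem : Sum.inr p ∈ geoInterval (oC4 G) T :=
      Set.mem_union_right _
        ⟨_, hinl p.1.1, _, hinl p.1.2, _, hg, by simp⟩
    rwa [hconv] at hmem


/-- every hull set of `G` is a hull set of `G→C4`;
hence `ohn(G→C4) ≤ hn(G)`. -/
theorem stmt_7 [Fintype V] (G : SimpleGraph V) :
    (∀ S : Set V, IsHullSet G.Adj S → IsHullSet (oC4 G) (Sum.inl '' S)) ∧
    hullNumber (oC4 G) ≤ hullNumber G.Adj := by
  refine ⟨fun S hS => hull_image G S hS, ?_⟩
  have hne : hullNumber G.Adj ∈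
      {n | ∃ S : Set V, S.Finite ∧ S.ncard = n ∧ IsHullSet G.Adj S} :=
    Nat.sInf_mem ⟨(Set.univ : Set V).ncard, Set.univ, Set.finite_univ, rfl, univ_isHullSet _⟩
  obtain ⟨S, hfin, hcard, hhull⟩ := hne
  exact Nat.sInf_le ⟨Sum.inl '' S, hfin.image _,
    by rw [Set.ncard_image_of_injective _ Sum.inl_injective, hcard],
    hull_image G S hhull⟩
end

section
/- If G is a connected bipartite graph, then the hull number of G equals the hull number of the oriented graph G→C4 obtained by replacing each edge with a directed 4-cycle. -/
variable {V : Type*}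

section generic
variable {A : V → V → Prop} {S T : Set V}

lemma subset_geoInterval : S ⊆ geoInterval A S := Set.subset_union_left

lemma geoInterval_mono (h : S ⊆ T) : geoInterval A S ⊆ geoInterval A T := by
  rintro w (hw | ⟨u, hu, v, hv, l, hl, hwl⟩)
  · exact Or.inl (h hw)
  · exact Or.inr ⟨u, h hu, v, h hv, l, hl, hwl⟩

lemma subset_geoHull : S ⊆ geoHull A S := fun x hx T hT => hT.1 hx

lemma geoHull_subset (hST : S ⊆ T) (hT : GeoConvex A T) : geoHull A S ⊆ T :=
  Set.sInter_subset_of_mem ⟨hST, hT⟩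

lemma geoConvex_geoHull : GeoConvex A (geoHull A S) := by
  apply Set.Subset.antisymm
  · intro w hw
    intro T hT
    have h1 : geoHull A S ⊆ T := Set.sInter_subset_of_mem hT
    have : geoInterval A (geoHull A S) ⊆ geoInterval A T := geoInterval_mono h1
    have := this hw
    rwa [hT.2] at this
  · exact subset_geoInterval

lemma geoHull_mono (h : S ⊆ T) : geoHull A S ⊆ geoHull A T :=
  geoHull_subset (h.trans subset_geoHull) geoConvex_geoHull

lemma geoConvex_univ : GeoConvex A (Set.univ : Set V) := by
  apply Set.Subset.antisymm (fun x _ => trivial) subset_geoInterval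

lemma isHullSet_univ : IsHullSet A (Set.univ : Set V) :=
  Set.Subset.antisymm (geoHull_subset subset_rfl geoConvex_univ) subset_geoHull

lemma mem_geoInterval_of_geodesic {u v w : V} {l : List V} (hu : u ∈ S) (hv : v ∈ S)
    (hl : IsGeodesic A u v l) (hw : w ∈ l) : w ∈ geoInterval A S :=
  Or.inr ⟨u, hu, v, hv, l, hl, hw⟩

lemma geoInterval_subset_geoHull : geoInterval A S ⊆ geoHull A S := by
  have h : geoInterval A S ⊆ geoInterval A (geoHull A S) :=
    geoInterval_mono (subset_geoHull (A := A) (S := S))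
  rw [geoConvex_geoHull] at h
  exact h

lemma diwalk_singleton (u : V) : DiwalkFrom A u u [u] := ⟨List.isChain_singleton u, rfl, rfl⟩

lemma diwalk_ne_nil {u v : V} {l : List V} (h : DiwalkFrom A u v l) : l ≠ [] := by
  rintro rfl; simp [DiwalkFrom] at h

lemma geodesic_self (u : V) : IsGeodesic A u u [u] := by
  refine ⟨diwalk_singleton u, fun l' hl' => ?_⟩
  have := diwalk_ne_nil hl'
  simpa [Nat.succ_le_iff, List.length_pos_iff] using this

lemma geodesic_singleton_eq {u : V} {l : List V} (h : IsGeodesic A u u l) : l = [u] := by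
  have h1 := h.2 [u] (diwalk_singleton u)
  have h2 := diwalk_ne_nil h.1
  have : l.length = 1 := le_antisymm h1 (by
    have := List.length_pos_iff.2 h2; omega)
  rcases l with _ | ⟨a, _ | _⟩ <;> simp_all [DiwalkFrom]
  have := h.1.2.1
  simpa using this

lemma geoHull_singleton (u : V) : geoHull A {u} = {u} := by
  apply Set.Subset.antisymm _ subset_geoHull
  apply geoHull_subset subset_rfl
  apply Set.Subset.antisymm _ subset_geoInterval
  rintro w (hw | ⟨a, ha, b, hb, l, hl, hwl⟩)
  · exact hw
  · rcases ha with rfl; rcases hb with rfl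
    have := geodesic_singleton_eq hl
    subst this
    simpa using hwl

lemma geoHull_empty : geoHull A (∅ : Set V) = ∅ := by
  apply Set.Subset.antisymm _ subset_geoHull
  apply geoHull_subset subset_rfl
  apply Set.Subset.antisymm _ subset_geoInterval
  rintro w (hw | ⟨a, ha, _⟩)
  · exact hw
  · exact ha.elim

end generic

section dist
variable {A : V → V → Prop}

noncomputable def gd (A : V → V → Prop) (u v : V) : ℕ :=
  sInf {n | ∃ l, DiwalkFrom A u v l ∧ l.length = n}

lemma gd_le {u v : V} {l : List V} (h : DiwalkFrom A u v l) : gd A u v ≤ l.length :=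
  Nat.sInf_le ⟨l, h, rfl⟩

lemma exists_geodesic_gd {u v : V} (hne : ∃ l, DiwalkFrom A u v l) :
    ∃ l, IsGeodesic A u v l ∧ l.length = gd A u v := by
  obtain ⟨l₀, hl₀⟩ := hne
  have hmem : gd A u v ∈ {n | ∃ l, DiwalkFrom A u v l ∧ l.length = n} :=
    Nat.sInf_mem ⟨l₀.length, l₀, hl₀, rfl⟩
  obtain ⟨l, hl, hlen⟩ := hmem
  exact ⟨l, ⟨hl, fun l' hl' => hlen ▸ gd_le hl'⟩, hlen⟩

lemma diwalk_concat {u v w : V} {l : List V} (h : DiwalkFrom A u v l) (hvw : A v w) :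
    DiwalkFrom A u w (l ++ [w]) := by
  obtain ⟨hc, hh, hl⟩ := h
  refine ⟨?_, ?_, ?_⟩
  · unfold List.Chain'; rw [List.isChain_append]
    refine ⟨hc, List.isChain_singleton w, ?_⟩
    intro x hx y hy
    simp only [List.head?_cons] at hy
    rw [hl] at hx
    simp at hx hy
    subst hx; subst hy; exact hvw
  · rw [List.head?_append_of_ne_nil]
    · exact hh
    · exact diwalk_ne_nil ⟨hc, hh, hl⟩
  · simp

lemma diwalk_cons {u v w : V} {l : List V} (h : DiwalkFrom A v w l) (huv : A u v) :
    DiwalkFrom A u w (u :: l) := by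
  obtain ⟨hc, hh, hl⟩ := h
  rcases l with _ | ⟨b, t⟩
  · simp at hh
  · simp only [List.head?_cons, Option.some.injEq] at hh
    subst hh
    exact ⟨List.isChain_cons_cons.2 ⟨huv, hc⟩, rfl, by rwa [List.getLast?_cons_cons]⟩

end dist

section graph
variable {G : SimpleGraph V}

lemma exists_gwalk (hconn : G.Connected) (u v : V) : ∃ l, DiwalkFrom G.Adj u v l := by
  obtain ⟨w⟩ := hconn.preconnected u v
  refine ⟨w.support, w.isChain_adj_support, ?_, ?_⟩
  · rw [w.support_eq_cons]; rfl
  · rw [List.getLast?_eq_getLast w.support_ne_nil]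
    simp

lemma fin2_flip {a b x : Fin 2} (h : a ≠ b) : (x = a ↔ ¬ (x = b)) := by
  have h1 := a.is_lt; have h2 := b.is_lt; have h3 := x.is_lt
  rw [Fin.ext_iff, Fin.ext_iff, ne_eq, Fin.ext_iff] at *
  omega

lemma walk_parity {c : V → Fin 2} (hc : ∀ a b, G.Adj a b → c a ≠ c b) :
    ∀ (l : List V) (u v : V), DiwalkFrom G.Adj u v l → (c u = c v ↔ Odd l.length)
  | [], u, v, h => by simp [DiwalkFrom] at h
  | [x], u, v, h => by
    obtain ⟨_, hh, hl⟩ := h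
    have hxu : x = u := by simpa using hh
    have hxv : x = v := by simpa using hl
    subst hxu; subst hxv
    simp
  | x :: y :: t, u, v, h => by
    obtain ⟨hch, hh, hl⟩ := h
    simp only [List.head?_cons, Option.some.injEq] at hh
    subst hh
    unfold List.Chain' at hch; rw [List.isChain_cons_cons] at hch
    have hyt : DiwalkFrom G.Adj y v (y :: t) :=
      ⟨hch.2, rfl, by rwa [List.getLast?_cons_cons] at hl⟩
    have ih := walk_parity hc (y :: t) y v hyt
    have hxy := hc _ _ hch.1
    have flip : (c x = c v ↔ ¬ (c y = c v)) := by
      have h1 := (c x).is_lt; have h2 := (c y).is_lt; have h3 := (c v).is_lt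
      rw [Fin.ext_iff, Fin.ext_iff, ne_eq, Fin.ext_iff] at *
      omega
    rw [flip, ih]
    simp [Nat.odd_add_one]

lemma pair_reduce_asym (hconn : G.Connected) {c : V → Fin 2}
    (hc : ∀ a b, G.Adj a b → c a ≠ c b) {W : Set V} {u : V} (hu : u ∈ W) {i j : V}
    (hij : G.Adj i j) (hlt : gd G.Adj u i < gd G.Adj u j)
    (h : geoHull G.Adj (W ∪ {i, j}) = Set.univ) :
    geoHull G.Adj (W ∪ {j}) = Set.univ := by
  obtain ⟨li, hli, hlen⟩ := exists_geodesic_gd (exists_gwalk hconn u i)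
  have hwalk : DiwalkFrom G.Adj u j (li ++ [j]) := diwalk_concat hli.1 hij
  have hle : gd G.Adj u j ≤ li.length + 1 := by
    have := gd_le hwalk; simpa using this
  have hgeo : IsGeodesic G.Adj u j (li ++ [j]) := by
    refine ⟨hwalk, fun l' hl' => ?_⟩
    have h1 := gd_le hl'
    have h2 : (li ++ [j]).length = li.length + 1 := by simp
    omega
  have hi_mem : i ∈ li ++ [j] := by
    have : i ∈ li := by
      have h1 := hli.1.2.2
      exact List.mem_of_mem_getLast? h1
    exact List.mem_append_left _ this
  have hi : i ∈ geoInterval G.Adj (W ∪ {j}) :=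
    mem_geoInterval_of_geodesic (Or.inl hu) (Or.inr rfl) hgeo hi_mem
  have hiH : i ∈ geoHull G.Adj (W ∪ {j}) := geoInterval_subset_geoHull hi
  have hsub : W ∪ {i, j} ⊆ geoHull G.Adj (W ∪ {j}) := by
    rintro x (hx | hx)
    · exact subset_geoHull (Or.inl hx)
    · rcases hx with rfl | rfl
      · exact hiH
      · exact subset_geoHull (Or.inr rfl)
  apply Set.eq_univ_of_univ_subset
  rw [← h]
  exact geoHull_subset hsub geoConvex_geoHull

lemma pair_reduce (hconn : G.Connected) {c : V → Fin 2}
    (hc : ∀ a b, G.Adj a b → c a ≠ c b) {W : Set V} {u : V} (hu : u ∈ W) {i j : V}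
    (hij : G.Adj i j) (h : geoHull G.Adj (W ∪ {i, j}) = Set.univ) :
    geoHull G.Adj (W ∪ {i}) = Set.univ ∨ geoHull G.Adj (W ∪ {j}) = Set.univ := by
  have hne : gd G.Adj u i ≠ gd G.Adj u j := by
    obtain ⟨li, hli, hleni⟩ := exists_geodesic_gd (exists_gwalk hconn u i)
    obtain ⟨lj, hlj, hlenj⟩ := exists_geodesic_gd (exists_gwalk hconn u j)
    have pi := (walk_parity hc li u i hli.1)
    have pj := (walk_parity hc lj u j hlj.1)
    have hij' := hc _ _ hij
    intro heq
    rw [hleni, heq] at pi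
    rw [hlenj] at pj
    have hiff : (c u = c i) ↔ (c u = c j) := pi.trans pj.symm
    have h1 := (c u).is_lt; have h2 := (c i).is_lt; have h3 := (c j).is_lt
    rw [Fin.ext_iff, Fin.ext_iff] at hiff
    rw [ne_eq, Fin.ext_iff] at hij'
    omega
  rcases lt_or_gt_of_ne hne with hlt | hlt
  · exact Or.inr (pair_reduce_asym hconn hc hu hij hlt h)
  · left
    have h' : geoHull G.Adj (W ∪ {j, i}) = Set.univ := by
      rw [Set.pair_comm j i]; exact h
    exact pair_reduce_asym hconn hc hu hij.symm hlt h'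

end graph

def ends (E : Set (V × V)) : Set V := Prod.fst '' E ∪ Prod.snd '' E

lemma choice_lemma [Fintype V] {G : SimpleGraph V} (hconn : G.Connected) {c : V → Fin 2}
    (hc : ∀ a b, G.Adj a b → c a ≠ c b) :
    ∀ (n : ℕ) (E : Set (V × V)), E.ncard = n → (∀ q ∈ E, G.Adj q.1 q.2) →
    ∀ P : Set V, (P.Nonempty ∨ 2 ≤ E.ncard) →
    geoHull G.Adj (P ∪ ends E) = Set.univ →
    ∃ S : Set V, S.ncard ≤ P.ncard + n ∧ geoHull G.Adj S = Set.univ := by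
  intro n
  induction n with
  | zero =>
    intro E hcard _ P _ hhull
    have hE : E = ∅ := (Set.ncard_eq_zero (Set.toFinite E)).1 hcard
    subst hE
    refine ⟨P, by omega, ?_⟩
    simpa [ends] using hhull
  | succ n ih =>
    intro E hcard hadj P hanchor hhull
    have hEne : E.Nonempty := by
      rw [← Set.ncard_pos (Set.toFinite E), hcard]; omega
    obtain ⟨e, he⟩ := hEne
    set E₀ := E \ {e} with hE₀def
    have hE : insert e E₀ = E := by
      rw [hE₀def, Set.insert_diff_singleton, Set.insert_eq_self.2 he]
    have hcard₀ : E₀.ncard = n := by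
      rw [hE₀def, Set.ncard_diff_singleton_of_mem he, hcard]
      omega

    set W := P ∪ ends E₀ with hWdef
    have hWne : W.Nonempty := by
      rcases hanchor with hP | h2
      · exact hP.mono Set.subset_union_left
      · have : E₀.Nonempty := by
          rw [← Set.ncard_pos (Set.toFinite E₀), hcard₀]
          rw [hcard] at h2; omega
        obtain ⟨e', he'⟩ := this
        exact ⟨e'.1, Or.inr (Or.inl ⟨e', he', rfl⟩)⟩
    obtain ⟨u, hu⟩ := hWne
    have hends : ends (insert e E₀) = insert e.1 (insert e.2 (ends E₀)) := by
      simp only [ends, Set.image_insert_eq, Set.insert_union, Set.union_insert]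
      rw [Set.insert_comm]
    have hset : P ∪ ends E = W ∪ {e.1, e.2} := by
      rw [← hE, hends, hWdef]
      ext x
      simp only [Set.mem_union, Set.mem_insert_iff, Set.mem_singleton_iff]
      tauto
    rw [hset] at hhull
    have hred := pair_reduce hconn hc hu (hadj e he) hhull
    have key : ∀ k, geoHull G.Adj (W ∪ {k}) = Set.univ →
        ∃ S : Set V, S.ncard ≤ P.ncard + (n + 1) ∧ geoHull G.Adj S = Set.univ := by
      intro k hk
      have hset2 : insert k P ∪ ends E₀ = W ∪ {k} := by
        ext x
        simp only [hWdef, Set.mem_union, Set.mem_insert_iff, Set.mem_singleton_iff]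
        tauto
      obtain ⟨S, hS1, hS2⟩ := ih E₀ hcard₀ (fun q hq => hadj q hq.1) (insert k P)
        (Or.inl ⟨k, Set.mem_insert k P⟩) (by rw [hset2]; exact hk)
      refine ⟨S, ?_, hS2⟩
      have := Set.ncard_insert_le k P
      omega
    rcases hred with hk | hk
    · exact key _ hk
    · exact key _ hk

section oc4
variable {G : SimpleGraph V}

def projC4 : List (oC4V G) → List V :=
  List.filterMap (fun z => match z with | Sum.inl i => some i | Sum.inr _ => none)

@[simp] lemma projC4_nil : projC4 ([] : List (oC4V G)) = [] := rfl
@[simp] lemma projC4_inl (i : V) (l : List (oC4V G)) :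
    projC4 (Sum.inl i :: l) = i :: projC4 l := rfl
@[simp] lemma projC4_inr (p : {p : V × V // G.Adj p.1 p.2}) (l : List (oC4V G)) :
    projC4 (Sum.inr p :: l) = projC4 l := rfl

lemma proj_spec : ∀ (l : List (oC4V G)) (u v : V), l.Chain' (oC4 G) →
    l.head? = some (Sum.inl u) → l.getLast? = some (Sum.inl v) →
    (projC4 l).Chain' G.Adj ∧ (projC4 l).head? = some u ∧ (projC4 l).getLast? = some v ∧
    l.length + 1 = 2 * (projC4 l).length ∧
    ∀ p, Sum.inr p ∈ l → (p.1.1 ∈ projC4 l ∧ p.1.2 ∈ projC4 l)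
  | [], u, v, _, hh, _ => by simp at hh
  | [z], u, v, _, hh, hl => by
    simp only [List.head?_cons, Option.some.injEq] at hh
    have hzv : z = Sum.inl v := by simpa using hl
    subst hh
    obtain rfl : u = v := by simpa using hzv
    refine ⟨List.isChain_singleton u, by simp, by simp, by simp, ?_⟩
    rintro p hp
    simp at hp
  | [z₁, z₂], u, v, hch, hh, hl => by
    simp only [List.head?_cons, Option.some.injEq] at hh
    subst hh
    have hz₂ : z₂ = Sum.inl v := by simpa using hl
    subst hz₂
    unfold List.Chain' at hch; rw [List.isChain_cons_cons] at hch
    have : False := hch.1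
    exact this.elim
  | z₁ :: z₂ :: z₃ :: t', u, v, hch, hh, hl => by
    simp only [List.head?_cons, Option.some.injEq] at hh
    subst hh
    unfold List.Chain' at hch; rw [List.isChain_cons_cons] at hch
    obtain ⟨h12, hch2⟩ := hch
    rcases z₂ with i | p
    · exact absurd h12 (by simp [oC4])
    rw [List.isChain_cons_cons] at hch2
    obtain ⟨h23, hch3⟩ := hch2
    rcases z₃ with j | q
    swap
    · exact absurd h23 (by simp [oC4])
    have hup : u = p.1.1 := h12
    have hjp : j = p.1.2 := h23
    have hl' : (Sum.inl j :: t').getLast? = some (Sum.inl v) := by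
      rwa [List.getLast?_cons_cons, List.getLast?_cons_cons] at hl
    obtain ⟨ih1, ih2, ih3, ih4, ih5⟩ := proj_spec (Sum.inl j :: t') j v hch3 rfl hl'
    have hproj : projC4 (Sum.inl u :: Sum.inr p :: Sum.inl j :: t') = u :: j :: projC4 t' := by
      simp
    have hadj : G.Adj u j := by rw [hup, hjp]; exact p.2
    refine ⟨?_, ?_, ?_, ?_, ?_⟩
    · unfold List.Chain'; rw [hproj, List.isChain_cons_cons]
      exact ⟨hadj, by simpa [List.Chain'] using ih1⟩
    · simp
    · rw [hproj, List.getLast?_cons_cons]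
      simpa using ih3
    · rw [hproj]
      have := ih4
      simp only [projC4_inl, List.length_cons] at this ⊢
      omega
    · rintro q hq
      rw [hproj]
      simp only [List.mem_cons] at hq
      rcases hq with hq | hq | hq | hq
      · exact absurd hq (by simp)
      · obtain rfl : q = p := by simpa using hq
        constructor
        · rw [← hup]; simp
        · rw [← hjp]; simp
      · exact absurd hq (by simp)
      · have h5 := ih5 q (List.mem_cons.2 (Or.inr hq))
        simp only [projC4_inl, List.mem_cons] at h5
        refine ⟨?_, ?_⟩ <;> simp only [List.mem_cons] <;> tauto

open Classical in
noncomputable def liftC4 (G : SimpleGraph V) : List V → List (oC4V G)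
  | [] => []
  | [a] => [Sum.inl a]
  | a :: b :: t =>
      Sum.inl a :: (if h : G.Adj a b then Sum.inr ⟨(a, b), h⟩ :: liftC4 G (b :: t) else [])

lemma lift_spec : ∀ (l : List V) (u v : V), l.Chain' G.Adj →
    l.head? = some u → l.getLast? = some v →
    DiwalkFrom (oC4 G) (Sum.inl u) (Sum.inl v) (liftC4 G l) ∧
    (liftC4 G l).length + 1 = 2 * l.length ∧
    ∀ w ∈ l, Sum.inl w ∈ liftC4 G l
  | [], u, v, _, hh, _ => by simp at hh
  | [a], u, v, _, hh, hl => by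
    obtain rfl : a = u := by simpa using hh
    obtain rfl : a = v := by simpa using hl
    exact ⟨diwalk_singleton _, by simp [liftC4], by simp [liftC4]⟩
  | a :: b :: t, u, v, hch, hh, hl => by
    obtain rfl : u = a := by simpa using hh.symm
    unfold List.Chain' at hch; rw [List.isChain_cons_cons] at hch
    obtain ⟨hab, hch2⟩ := hch
    have hl' : (b :: t).getLast? = some v := by rwa [List.getLast?_cons_cons] at hl
    obtain ⟨ihw, ihlen, ihmem⟩ := lift_spec (b :: t) b v hch2 rfl hl'
    have hlift : liftC4 G (u :: b :: t) =
        Sum.inl u :: Sum.inr ⟨(u, b), hab⟩ :: liftC4 G (b :: t) := by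
      simp [liftC4, dif_pos hab]
    have d1 : DiwalkFrom (oC4 G) (Sum.inr ⟨(u, b), hab⟩) (Sum.inl v)
        (Sum.inr ⟨(u, b), hab⟩ :: liftC4 G (b :: t)) := diwalk_cons ihw rfl
    have d2 : DiwalkFrom (oC4 G) (Sum.inl u) (Sum.inl v)
        (Sum.inl u :: Sum.inr ⟨(u, b), hab⟩ :: liftC4 G (b :: t)) := diwalk_cons d1 rfl
    refine ⟨by rwa [hlift], ?_, ?_⟩
    · rw [hlift]
      simp only [List.length_cons] at ihlen ⊢
      omega
    · intro w hw
      rw [hlift]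
      rcases List.mem_cons.1 hw with rfl | hw
      · simp
      · have := ihmem w hw
        simp [List.mem_cons] at this ⊢
        tauto

end oc4

section transfer
variable {G : SimpleGraph V}

lemma mem_projC4 {i : V} {l : List (oC4V G)} (h : Sum.inl i ∈ l) : i ∈ projC4 l := by
  simp only [projC4, List.mem_filterMap]
  exact ⟨Sum.inl i, h, rfl⟩

lemma geodesic_inl_inl {u v : V} {l : List (oC4V G)}
    (h : IsGeodesic (oC4 G) (Sum.inl u) (Sum.inl v) l) :
    IsGeodesic G.Adj u v (projC4 l) ∧ l.length + 1 = 2 * (projC4 l).length ∧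
    ∀ p, Sum.inr p ∈ l → p.1.1 ∈ projC4 l ∧ p.1.2 ∈ projC4 l := by
  obtain ⟨⟨hch, hh, hl⟩, hmin⟩ := h
  obtain ⟨p1, p2, p3, p4, p5⟩ := proj_spec l u v hch hh hl
  refine ⟨⟨⟨p1, p2, p3⟩, ?_⟩, p4, p5⟩
  intro m hm
  obtain ⟨hw, hlen, _⟩ := lift_spec m u v hm.1 hm.2.1 hm.2.2
  have := hmin _ hw
  omega

lemma geodesic_lift {u v : V} {l : List V} (h : IsGeodesic G.Adj u v l) :
    IsGeodesic (oC4 G) (Sum.inl u) (Sum.inl v) (liftC4 G l) := by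
  obtain ⟨⟨hch, hh, hl⟩, hmin⟩ := h
  obtain ⟨hw, hlen, _⟩ := lift_spec l u v hch hh hl
  refine ⟨hw, fun l' hl' => ?_⟩
  obtain ⟨q1, q2, q3, q4, _⟩ := proj_spec l' u v hl'.1 hl'.2.1 hl'.2.2
  have := hmin _ ⟨q1, q2, q3⟩
  omega

lemma edge_geodesic {p : {p : V × V // G.Adj p.1 p.2}} :
    IsGeodesic (oC4 G) (Sum.inl p.1.1) (Sum.inl p.1.2)
      [Sum.inl p.1.1, Sum.inr p, Sum.inl p.1.2] := by
  constructor
  · refine ⟨?_, rfl, rfl⟩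
    unfold List.Chain'; rw [List.isChain_cons_cons, List.isChain_cons_cons]
    exact ⟨rfl, rfl, List.isChain_singleton _⟩
  · intro l' hl'
    obtain ⟨q1, q2, q3, q4, _⟩ := proj_spec l' p.1.1 p.1.2 hl'.1 hl'.2.1 hl'.2.2
    have hne : p.1.1 ≠ p.1.2 := p.2.ne
    have : 2 ≤ (projC4 l').length := by
      rcases hproj : projC4 l' with _ | ⟨a, _ | ⟨b, r⟩⟩
      · rw [hproj] at q2; simp at q2
      · rw [hproj] at q2 q3
        simp at q2 q3
        exact absurd (q2.symm.trans q3) hne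
      · simp
    show ([Sum.inl p.1.1, Sum.inr p, Sum.inl p.1.2] : List (oC4V G)).length ≤ l'.length
    have h3 : ([Sum.inl p.1.1, Sum.inr p, Sum.inl p.1.2] : List (oC4V G)).length = 3 := rfl
    rw [h3]
    omega

lemma strip_front {p : {p : V × V // G.Adj p.1 p.2}} {y : oC4V G} {l : List (oC4V G)}
    (h : IsGeodesic (oC4 G) (Sum.inr p) y l) :
    ∃ t, l = Sum.inr p :: t ∧
      ((t = [] ∧ y = Sum.inr p) ∨ IsGeodesic (oC4 G) (Sum.inl p.1.2) y t) := by
  obtain ⟨⟨hch, hh, hl⟩, hmin⟩ := h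
  rcases l with _ | ⟨z, t⟩
  · simp at hh
  obtain rfl : z = Sum.inr p := by simpa using hh
  refine ⟨t, rfl, ?_⟩
  rcases t with _ | ⟨z₂, t₂⟩
  · exact Or.inl ⟨rfl, by simpa using hl.symm⟩
  right
  unfold List.Chain' at hch; rw [List.isChain_cons_cons] at hch
  obtain ⟨h12, hch2⟩ := hch
  obtain rfl : z₂ = Sum.inl p.1.2 := by
    rcases z₂ with j | q
    · rw [show (j : V) = p.1.2 from h12]
    · exact absurd h12 (by simp [oC4])
  refine ⟨⟨hch2, rfl, by rwa [List.getLast?_cons_cons] at hl⟩, ?_⟩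
  intro m hm
  have hwalk : DiwalkFrom (oC4 G) (Sum.inr p) y (Sum.inr p :: m) := diwalk_cons hm rfl
  have := hmin _ hwalk
  simpa using this

lemma strip_back {q : {p : V × V // G.Adj p.1 p.2}} {x : oC4V G} {l : List (oC4V G)}
    (h : IsGeodesic (oC4 G) x (Sum.inr q) l) :
    ∃ t, l = t ++ [Sum.inr q] ∧
      ((t = [] ∧ x = Sum.inr q) ∨ IsGeodesic (oC4 G) x (Sum.inl q.1.1) t) := by
  obtain ⟨⟨hch, hh, hl⟩, hmin⟩ := h
  have hne : l ≠ [] := diwalk_ne_nil ⟨hch, hh, hl⟩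
  have hsplit : l = l.dropLast ++ [Sum.inr q] := by
    have h1 := List.dropLast_append_getLast hne
    have h2 : l.getLast hne = Sum.inr q := by
      rw [List.getLast?_eq_getLast hne] at hl
      simpa using hl
    rw [h2] at h1
    exact h1.symm
  refine ⟨l.dropLast, hsplit, ?_⟩
  rcases ht : l.dropLast with _ | ⟨z, t₂⟩
  · rw [ht] at hsplit
    simp only [List.nil_append] at hsplit
    subst hsplit
    exact Or.inl ⟨rfl, by simpa using hh.symm⟩
  right
  rw [← ht]
  unfold List.Chain' at hch; rw [hsplit, List.isChain_append] at hch
  obtain ⟨hc1, _, harc⟩ := hch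
  have hdne : l.dropLast ≠ [] := by rw [ht]; simp
  have hlast : l.dropLast.getLast? = some (Sum.inl q.1.1) := by
    rw [List.getLast?_eq_getLast hdne]
    have harc' := harc _ (by rw [List.getLast?_eq_getLast hdne]; rfl) (Sum.inr q) rfl
    rcases hz : l.dropLast.getLast hdne with j | r
    · rw [hz] at harc'
      have : j = q.1.1 := harc'
      rw [this]
    · rw [hz] at harc'
      exact absurd harc' (by simp [oC4])
  have hhead : l.dropLast.head? = some x := by
    rw [hsplit, List.head?_append_of_ne_nil _ hdne] at hh
    exact hh
  refine ⟨⟨hc1, hhead, hlast⟩, ?_⟩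
  intro m hm
  have hwalk : DiwalkFrom (oC4 G) x (Sum.inr q) (m ++ [Sum.inr q]) := diwalk_concat hm rfl
  have h1 := hmin _ hwalk
  have h2 : l.length = l.dropLast.length + 1 := by
    conv_lhs => rw [hsplit]
    simp
  simp only [List.length_append, List.length_singleton] at h1
  omega

end transfer

section main
variable {G : SimpleGraph V}

def Tlift (G : SimpleGraph V) (T : Set V) : Set (oC4V G) :=
  Sum.inl '' T ∪ {z | ∃ p, z = Sum.inr p ∧ p.1.1 ∈ T ∧ p.1.2 ∈ T}

lemma core_mem {T : Set V} (hT : GeoConvex G.Adj T) {u v : V} (hu : u ∈ T) (hv : v ∈ T)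
    {l : List (oC4V G)} (hl : IsGeodesic (oC4 G) (Sum.inl u) (Sum.inl v) l) :
    ∀ w ∈ l, w ∈ Tlift G T := by
  obtain ⟨hgeo, _, hmem⟩ := geodesic_inl_inl hl
  intro w hw
  rcases w with i | p
  · left
    refine ⟨i, ?_, rfl⟩
    have : i ∈ geoInterval G.Adj T := mem_geoInterval_of_geodesic hu hv hgeo (mem_projC4 hw)
    rwa [hT] at this
  · right
    obtain ⟨h1, h2⟩ := hmem p hw
    have m1 : p.1.1 ∈ geoInterval G.Adj T := mem_geoInterval_of_geodesic hu hv hgeo h1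
    have m2 : p.1.2 ∈ geoInterval G.Adj T := mem_geoInterval_of_geodesic hu hv hgeo h2
    rw [hT] at m1 m2
    exact ⟨p, rfl, m1, m2⟩

lemma Tlift_convex {T : Set V} (hT : GeoConvex G.Adj T) : GeoConvex (oC4 G) (Tlift G T) := by
  apply Set.Subset.antisymm _ subset_geoInterval
  rintro w (hw | ⟨x, hx, y, hy, l, hl, hwl⟩)
  · exact hw
  rcases hx with ⟨u, hu, rfl⟩ | ⟨p, rfl, hp1, hp2⟩
  · rcases hy with ⟨v, hv, rfl⟩ | ⟨q, rfl, hq1, hq2⟩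
    · exact core_mem hT hu hv hl w hwl
    · obtain ⟨t, rfl, hcase⟩ := strip_back hl
      rcases hcase with ⟨rfl, habs⟩ | hgeo
      · simp at habs
      rcases List.mem_append.1 hwl with hw' | hw'
      · exact core_mem hT hu hq1 hgeo w hw'
      · obtain rfl : w = Sum.inr q := by simpa using hw'
        exact Or.inr ⟨q, rfl, hq1, hq2⟩
  · rcases hy with ⟨v, hv, rfl⟩ | ⟨q, rfl, hq1, hq2⟩
    · obtain ⟨t, rfl, hcase⟩ := strip_front hl
      rcases hcase with ⟨rfl, habs⟩ | hgeo
      · simp at habs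
      rcases List.mem_cons.1 hwl with rfl | hw'
      · exact Or.inr ⟨p, rfl, hp1, hp2⟩
      · exact core_mem hT hp2 hv hgeo w hw'
    · obtain ⟨t, rfl, hcase⟩ := strip_front hl
      rcases hcase with ⟨rfl, _⟩ | hgeo
      · obtain rfl : w = Sum.inr p := by simpa using hwl
        exact Or.inr ⟨p, rfl, hp1, hp2⟩
      obtain ⟨t₂, rfl, hcase₂⟩ := strip_back hgeo
      rcases hcase₂ with ⟨rfl, habs⟩ | hgeo₂
      · simp at habs
      rcases List.mem_cons.1 hwl with rfl | hw'
      · exact Or.inr ⟨p, rfl, hp1, hp2⟩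
      rcases List.mem_append.1 hw' with hw'' | hw''
      · exact core_mem hT hp2 hq1 hgeo₂ w hw''
      · obtain rfl : w = Sum.inr q := by simpa using hw''
        exact Or.inr ⟨q, rfl, hq1, hq2⟩

lemma step6 {S : Set V} (hS : geoHull G.Adj S = Set.univ) :
    geoHull (oC4 G) (Sum.inl '' S) = Set.univ := by
  have key : ∀ T' : Set (oC4V G), Sum.inl '' S ⊆ T' → GeoConvex (oC4 G) T' → T' = Set.univ := by
    intro T' hsub hconv
    set T : Set V := {i | Sum.inl i ∈ T'} with hTdef
    have hTconv : GeoConvex G.Adj T := by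
      apply Set.Subset.antisymm _ subset_geoInterval
      rintro i (hi | ⟨u, hu, v, hv, l, hl, hil⟩)
      · exact hi
      · have hg := geodesic_lift hl
        have hmem := (lift_spec l u v hl.1.1 hl.1.2.1 hl.1.2.2).2.2 i hil
        have : Sum.inl i ∈ geoInterval (oC4 G) T' :=
          mem_geoInterval_of_geodesic hu hv hg hmem
        rwa [hconv] at this
    have hST : S ⊆ T := fun i hi => hsub ⟨i, hi, rfl⟩
    have hTuniv : T = Set.univ :=
      Set.eq_univ_of_univ_subset (hS ▸ geoHull_subset hST hTconv)
    have hinl : ∀ i : V, Sum.inl i ∈ T' := fun i => by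
      have : i ∈ T := hTuniv ▸ Set.mem_univ i
      exact this
    apply Set.eq_univ_of_forall
    rintro (i | p)
    · exact hinl i
    · have : Sum.inr p ∈ geoInterval (oC4 G) T' :=
        mem_geoInterval_of_geodesic (hinl p.1.1) (hinl p.1.2) (edge_geodesic (p := p)) (by simp)
      rwa [hconv] at this
  apply Set.eq_univ_of_forall
  intro z
  intro T' hT'
  rw [key T' hT'.1 hT'.2]
  trivial

lemma step3 {S' : Set (oC4V G)} (hS' : geoHull (oC4 G) S' = Set.univ) :
    geoHull G.Adj ({i | Sum.inl i ∈ S'} ∪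
      ends {q : V × V | ∃ h : G.Adj q.1 q.2, Sum.inr ⟨q, h⟩ ∈ S'}) = Set.univ := by
  set W := {i | Sum.inl i ∈ S'} ∪
      ends {q : V × V | ∃ h : G.Adj q.1 q.2, Sum.inr ⟨q, h⟩ ∈ S'} with hWdef
  set T := geoHull G.Adj W with hTdef
  have hTconv : GeoConvex G.Adj T := geoConvex_geoHull
  have hsub : S' ⊆ Tlift G T := by
    rintro (i | p) hz
    · exact Or.inl ⟨i, subset_geoHull (Or.inl hz), rfl⟩
    · right
      have hpE : p.1 ∈ {q : V × V | ∃ h : G.Adj q.1 q.2, Sum.inr ⟨q, h⟩ ∈ S'} := by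
        refine ⟨p.2, ?_⟩
        convert hz
      refine ⟨p, rfl, ?_, ?_⟩
      · exact subset_geoHull (Or.inr (Or.inl ⟨p.1, hpE, rfl⟩))
      · exact subset_geoHull (Or.inr (Or.inr ⟨p.1, hpE, rfl⟩))
  have hbig : Set.univ ⊆ Tlift G T := hS' ▸ geoHull_subset hsub (Tlift_convex hTconv)
  apply Set.eq_univ_of_forall
  intro i
  have : Sum.inl i ∈ Tlift G T := hbig trivial
  rcases this with ⟨j, hj, hji⟩ | ⟨p, hp, _⟩
  · obtain rfl : j = i := by simpa using hji
    exact hj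
  · simp at hp

end main

section final
variable {G : SimpleGraph V}

open Classical in
lemma dir_ge [Fintype V] (hconn : G.Connected) {c : V → Fin 2}
    (hc : ∀ a b, G.Adj a b → c a ≠ c b) {S' : Set (oC4V G)}
    (hhull : geoHull (oC4 G) S' = Set.univ) :
    ∃ S : Set V, S.ncard ≤ S'.ncard ∧ geoHull G.Adj S = Set.univ := by
  set P := {i : V | Sum.inl i ∈ S'} with hPdef
  set E := {q : V × V | ∃ h : G.Adj q.1 q.2, Sum.inr ⟨q, h⟩ ∈ S'} with hEdef
  have hadjE : ∀ q ∈ E, G.Adj q.1 q.2 := fun q hq => hq.1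
  -- cardinality bound
  have hcard : P.ncard + E.ncard ≤ S'.ncard := by
    set f : V × V → oC4V G := fun q =>
      if h : G.Adj q.1 q.2 then Sum.inr ⟨q, h⟩ else Sum.inl q.1 with hfdef
    have hAsub : Sum.inl '' P ⊆ S' := by rintro z ⟨i, hi, rfl⟩; exact hi
    have hBsub : f '' E ⊆ S' := by
      rintro z ⟨q, ⟨h, hmem⟩, rfl⟩
      rw [hfdef]
      simp only [dif_pos h]
      exact hmem
    have hdisj : Disjoint (Sum.inl '' P) (f '' E) := by
      rw [Set.disjoint_left]
      rintro z ⟨i, _, rfl⟩ ⟨q, ⟨h, _⟩, hfq⟩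
      rw [hfdef] at hfq
      simp only [dif_pos h] at hfq
      exact absurd hfq.symm (by simp)
    have hA : ((Sum.inl '' P : Set (oC4V G))).ncard = P.ncard :=
      Set.ncard_image_of_injective _ Sum.inl_injective
    have hB : (f '' E).ncard = E.ncard := by
      apply Set.ncard_image_of_injOn
      rintro q1 ⟨h1, _⟩ q2 ⟨h2, _⟩ heq
      rw [hfdef] at heq
      simp only [dif_pos h1, dif_pos h2] at heq
      simpa using heq
    have hunion : (Sum.inl '' P ∪ f '' E).ncard = P.ncard + E.ncard := by
      rw [Set.ncard_union_eq hdisj (Set.toFinite _) (Set.toFinite _), hA, hB]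
    rw [← hunion]
    exact Set.ncard_le_ncard (Set.union_subset hAsub hBsub) (Set.toFinite _)
  -- anchor condition
  have hanchor : P.Nonempty ∨ 2 ≤ E.ncard := by
    by_contra hcon
    push_neg at hcon
    obtain ⟨hPe, hEle⟩ := hcon
    have hnoinl : ∀ i : V, Sum.inl i ∉ S' := fun i hi => by
      have : i ∈ P := hi
      rw [hPe] at this
      exact this
    interval_cases hE : E.ncard
    · have hEe : E = ∅ := (Set.ncard_eq_zero (Set.toFinite E)).1 hE
      have hS'e : S' = ∅ := by
        ext z
        simp only [Set.mem_empty_iff_false, iff_false]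
        rintro hz
        rcases z with i | p
        · exact hnoinl i hz
        · have : p.1 ∈ E := ⟨p.2, by convert hz⟩
          rw [hEe] at this
          exact this
      rw [hS'e, geoHull_empty] at hhull
      have : Nonempty V := hconn.nonempty
      obtain ⟨v⟩ := this
      have : (Sum.inl v : oC4V G) ∈ (∅ : Set (oC4V G)) := hhull ▸ trivial
      exact this
    · obtain ⟨q, hEq⟩ := Set.ncard_eq_one.1 hE
      have hqE : q ∈ E := hEq ▸ rfl
      obtain ⟨hq, hqmem⟩ := hqE
      have hS's : S' = {Sum.inr ⟨q, hq⟩} := by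
        ext z
        simp only [Set.mem_singleton_iff]
        constructor
        · rintro hz
          rcases z with i | p
          · exact absurd hz (hnoinl i)
          · have : p.1 ∈ E := ⟨p.2, by convert hz⟩
            rw [hEq] at this
            have hpq : p.1 = q := this
            cases p with
            | mk pv pp =>
              simp only at hpq
              subst hpq
              rfl
        · rintro rfl
          exact hqmem
      rw [hS's, geoHull_singleton] at hhull
      have : (Sum.inl q.1 : oC4V G) ∈ ({Sum.inr ⟨q, hq⟩} : Set (oC4V G)) := hhull ▸ trivial
      simp at this
  -- apply step3 and choice lemma
  have hWhull : geoHull G.Adj (P ∪ ends E) = Set.univ := step3 hhull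
  obtain ⟨S, hS1, hS2⟩ := choice_lemma hconn hc E.ncard E rfl hadjE P hanchor hWhull
  exact ⟨S, le_trans hS1 hcard, hS2⟩

end final


/-- for a connected bipartite graph `G`, `hn(G) = ohn(G→C4)`. -/
theorem stmt_8 [Fintype V] (G : SimpleGraph V) (hconn : G.Connected)
    (hbip : G.Colorable 2) :
    hullNumber G.Adj = hullNumber (oC4 G) := by
  obtain ⟨C⟩ := hbip
  have hc : ∀ a b, G.Adj a b → C a ≠ C b := fun a b h => C.valid h
  apply le_antisymm
  · have hne : {n | ∃ S : Set (oC4V G), S.Finite ∧ S.ncard = n ∧ IsHullSet (oC4 G) S}.Nonempty :=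
      ⟨_, Set.univ, Set.finite_univ, rfl, isHullSet_univ⟩
    obtain ⟨S', _, hcard, hhull⟩ := Nat.sInf_mem hne
    obtain ⟨S, hle, hS⟩ := dir_ge hconn hc hhull
    have h1 : hullNumber G.Adj ≤ S.ncard := Nat.sInf_le ⟨S, Set.toFinite S, rfl, hS⟩
    exact h1.trans (hle.trans_eq hcard)
  · have hne : {n | ∃ S : Set V, S.Finite ∧ S.ncard = n ∧ IsHullSet G.Adj S}.Nonempty :=
      ⟨_, Set.univ, Set.finite_univ, rfl, isHullSet_univ⟩
    obtain ⟨S, _, hcard, hhull⟩ := Nat.sInf_mem hne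
    have hD : IsHullSet (oC4 G) (Sum.inl '' S) := step6 hhull
    have himg : (Sum.inl '' S : Set (oC4V G)).ncard = S.ncard :=
      Set.ncard_image_of_injective _ Sum.inl_injective
    exact Nat.sInf_le ⟨Sum.inl '' S, Set.toFinite _, himg.trans hcard, hD⟩
end

section
/- Let D be an oriented tree (an orientation of a tree). Then the set of extreme vertices of D is both the unique minimum hull set and the unique minimum geodetic set of D; consequently ohn(D) = ogn(D) = |ext(D)|, and moreover I(ext(D)) = V(D). -/
variable {V : Type*}

section Aux

variable {G : SimpleGraph V} {A : V → V → Prop}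

lemma key_aux (hT : G.IsTree) (hA : Oriented A)
    (horient : ∀ u v, G.Adj u v ↔ (A u v ∨ A v u)) :
    ∀ (n : ℕ) (l : List V), l.length ≤ n → ∀ u v, DiwalkFrom A u v l →
      ∃ p : G.Walk u v, p.IsPath ∧ p.support = l ∧ p.length = G.dist u v := by
  intro n
  induction n with
  | zero =>
    rintro l hl u v ⟨hc, hh, hlast⟩
    rw [Nat.le_zero, List.length_eq_zero_iff] at hl
    subst hl; simp at hh
  | succ n ih =>
    rintro l hl u v ⟨hc, hh, hlast⟩
    classical
    match l with
    | [] => simp at hh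
    | [a] =>
      obtain rfl : u = a := by simpa using hh.symm
      obtain rfl : v = u := by simpa using hlast.symm
      exact ⟨SimpleGraph.Walk.nil, by simp, by simp, by simp [SimpleGraph.dist_self]⟩
    | a :: b :: rest =>
      obtain rfl : u = a := by simpa using hh.symm
      obtain ⟨hab, hct⟩ := List.isChain_cons_cons.mp hc
      have hlast' : (b :: rest).getLast? = some v := by simpa using hlast
      have hDW : DiwalkFrom A b v (b :: rest) := ⟨hct, rfl, hlast'⟩
      have hlen : (b :: rest).length ≤ n := by
        simp only [List.length_cons] at hl ⊢; omega
      obtain ⟨p', hp'path, hp'supp, hp'len⟩ := ih _ hlen b v hDW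
      have hadj : G.Adj u b := (horient u b).mpr (Or.inl hab)
      have hne : u ≠ b := by rintro rfl; exact hA _ _ hab hab
      have hnotmem : u ∉ b :: rest := by
        intro hmem
        have hmem' : u ∈ rest := by
          rcases List.mem_cons.mp hmem with h | h
          · exact absurd h hne
          · exact h
        obtain ⟨r1, r2, hrest⟩ := List.append_of_mem hmem'
        have hpre_pref : (b :: (r1 ++ [u])) ++ r2 = b :: rest := by simp [hrest]
        have hcp : (b :: (r1 ++ [u])).Chain' A := hct.prefix ⟨r2, hpre_pref⟩
        have hDWpre : DiwalkFrom A b u (b :: (r1 ++ [u])) := by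
          refine ⟨hcp, rfl, ?_⟩
          show (b :: r1 ++ [u]).getLast? = some u
          exact List.getLast?_concat
        have hlenpre : (b :: (r1 ++ [u])).length ≤ n := by
          rw [hrest] at hlen
          simp only [List.length_cons, List.length_append, List.length_nil] at hlen ⊢
          omega
        obtain ⟨q, hqpath, hqsupp, hqlen⟩ := ih _ hlenpre b u hDWpre
        have hdba : G.dist b u = 1 := SimpleGraph.dist_eq_one_iff_adj.mpr hadj.symm
        have hsl := congrArg List.length hqsupp
        rw [SimpleGraph.Walk.length_support, hqlen, hdba] at hsl
        simp only [List.length_cons, List.length_append, List.length_singleton] at hsl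
        have hr1 : r1 = [] := List.length_eq_zero_iff.mp (by omega)
        subst hr1
        simp only [List.nil_append] at hcp
        exact hA u b hab (List.isChain_cons_cons.mp hcp).1
      have hle1 : G.dist u v ≤ G.dist b v + 1 := by
        have := SimpleGraph.dist_le (SimpleGraph.Walk.cons hadj p')
        simpa [hp'len, Nat.add_comm] using this
      have hgt : G.dist b v < G.dist u v := by
        by_contra hle2
        push_neg at hle2
        obtain ⟨q, hqpath, hqlen⟩ := hT.isConnected.exists_path_of_dist u v
        have hbq : b ∉ q.support := by
          intro hbq
          have h1 : 1 ≤ (q.takeUntil b hbq).length := by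
            have := SimpleGraph.dist_le (q.takeUntil b hbq)
            rwa [SimpleGraph.dist_eq_one_iff_adj.mpr hadj] at this
          have h2 : G.dist b v ≤ (q.dropUntil b hbq).length := SimpleGraph.dist_le _
          have h3 : (q.takeUntil b hbq).length + (q.dropUntil b hbq).length = q.length := by
            rw [← SimpleGraph.Walk.length_append, q.take_spec hbq]
          omega
        have hP2 : (SimpleGraph.Walk.cons hadj.symm q).IsPath := hqpath.cons hbq
        have huniq := hT.IsAcyclic.path_unique ⟨p', hp'path⟩
          ⟨SimpleGraph.Walk.cons hadj.symm q, hP2⟩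
        have hs := congrArg (fun p : G.Path b v => (p : G.Walk b v).support) huniq
        simp only [SimpleGraph.Walk.support_cons] at hs
        apply hnotmem
        rw [← hp'supp, hs]
        exact List.mem_cons_of_mem _ q.start_mem_support
      have hdist : G.dist u v = G.dist b v + 1 := by omega
      refine ⟨SimpleGraph.Walk.cons hadj p', ?_, ?_, ?_⟩
      · exact hp'path.cons (by rwa [hp'supp])
      · simp [hp'supp]
      · simp [hp'len, hdist]

lemma key_s11 (hT : G.IsTree) (hA : Oriented A)
    (horient : ∀ u v, G.Adj u v ↔ (A u v ∨ A v u)) {l : List V} {u v : V}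
    (h : DiwalkFrom A u v l) :
    ∃ p : G.Walk u v, p.IsPath ∧ p.support = l ∧ p.length = G.dist u v :=
  key_aux hT hA horient l.length l le_rfl u v h

lemma diwalk_length (hT : G.IsTree) (hA : Oriented A)
    (horient : ∀ u v, G.Adj u v ↔ (A u v ∨ A v u)) {l : List V} {u v : V}
    (h : DiwalkFrom A u v l) : l.length = G.dist u v + 1 := by
  obtain ⟨p, _, hsupp, hlen⟩ := key_s11 hT hA horient h
  rw [← hsupp, SimpleGraph.Walk.length_support, hlen]

lemma diwalk_isGeodesic (hT : G.IsTree) (hA : Oriented A)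
    (horient : ∀ u v, G.Adj u v ↔ (A u v ∨ A v u)) {l : List V} {u v : V}
    (h : DiwalkFrom A u v l) : IsGeodesic A u v l := by
  refine ⟨h, fun l' h' => ?_⟩
  rw [diwalk_length hT hA horient h, diwalk_length hT hA horient h']

end Aux

section Aux2
variable {G : SimpleGraph V} {A : V → V → Prop}

lemma DiwalkFrom.rev {l : List V} {u v : V} (h : DiwalkFrom A u v l) :
    DiwalkFrom (flip A) v u l.reverse := by
  obtain ⟨hc, hh, hl⟩ := h
  refine ⟨?_, ?_, ?_⟩
  · exact (List.isChain_reverse (R := flip A)).mpr hc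
  · rwa [List.head?_reverse]
  · rw [List.getLast?_eq_head?_reverse, List.reverse_reverse]; exact hh

lemma oriented_flip (hA : Oriented A) : Oriented (flip A) := fun u v h h' => hA v u h h'

lemma horient_flip (horient : ∀ u v, G.Adj u v ↔ (A u v ∨ A v u)) :
    ∀ u v, G.Adj u v ↔ (flip A u v ∨ flip A v u) := fun u v => (horient u v).trans or_comm

lemma exists_source_diwalk [Fintype V] (hT : G.IsTree) (hA : Oriented A)
    (horient : ∀ u v, G.Adj u v ↔ (A u v ∨ A v u)) (u : V) :
    ∃ s ls, DiwalkFrom A s u ls ∧ IsSource A s := by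
  suffices h : ∀ (k : ℕ) (l : List V) (s : V), DiwalkFrom A s u l →
      Fintype.card V + 1 ≤ l.length + k → ∃ s' l', DiwalkFrom A s' u l' ∧ IsSource A s' by
    exact h (Fintype.card V + 1) [u] u ⟨List.isChain_singleton u, rfl, rfl⟩ (by simp)
  intro k
  induction k with
  | zero =>
    intro l s hd hcard
    exfalso
    obtain ⟨p, hpath, hsupp, _⟩ := key_s11 hT hA horient hd
    have hnd : l.Nodup := hsupp ▸ hpath.support_nodup
    have := hnd.length_le_card
    omega
  | succ k ih =>
    intro l s hd hcard
    by_cases hs : IsSource A s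
    · exact ⟨s, l, hd, hs⟩
    · simp only [IsSource, not_forall, not_not] at hs
      obtain ⟨a, ha⟩ := hs
      obtain ⟨hc, hh, hl⟩ := hd
      match l, hh, hl, hc, hcard with
      | b :: l2, hh, hl, hc, hcard =>
        obtain rfl : b = s := by simpa using hh
        have hd' : DiwalkFrom A a u (a :: b :: l2) := by
          refine ⟨List.isChain_cons_cons.mpr ⟨ha, hc⟩, rfl, by simpa using hl⟩
        apply ih (a :: b :: l2) a hd'
        simp only [List.length_cons] at hcard ⊢
        omega

lemma exists_sink_diwalk [Fintype V] (hT : G.IsTree) (hA : Oriented A)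
    (horient : ∀ u v, G.Adj u v ↔ (A u v ∨ A v u)) (u : V) :
    ∃ t lt, DiwalkFrom A u t lt ∧ IsSink A t := by
  obtain ⟨t, m, hd, hsrc⟩ :=
    exists_source_diwalk (A := flip A) hT (oriented_flip hA) (horient_flip horient) u
  exact ⟨t, m.reverse, hd.rev, fun w hw => hsrc w hw⟩

lemma exists_thru [Fintype V] (hT : G.IsTree) (hA : Oriented A)
    (horient : ∀ u v, G.Adj u v ↔ (A u v ∨ A v u)) (w : V) :
    ∃ s t l, DiwalkFrom A s t l ∧ IsSource A s ∧ IsSink A t ∧ w ∈ l := by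
  obtain ⟨s, l1, ⟨hc1, hh1, hl1⟩, hs⟩ := exists_source_diwalk hT hA horient w
  obtain ⟨t, l2, ⟨hc2, hh2, hl2⟩, ht⟩ := exists_sink_diwalk hT hA horient w
  match l2, hh2, hl2, hc2 with
  | u0 :: l2', hh2, hl2, hc2 =>
    obtain rfl : u0 = w := by simpa using hh2
    refine ⟨s, t, l1 ++ l2', ⟨?_, ?_, ?_⟩, hs, ht, ?_⟩
    · refine List.isChain_append.mpr ⟨hc1, (List.isChain_cons.mp hc2).2, ?_⟩
      intro x hx y hy
      rw [hl1] at hx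
      obtain rfl : x = u0 := by simpa using hx.symm
      exact (List.isChain_cons.mp hc2).1 y hy
    · rw [List.head?_append, hh1]; rfl
    · rw [List.getLast?_append, hl1]
      match l2', hl2 with
      | [], hl2 =>
        obtain rfl : t = u0 := by simpa using hl2.symm
        rfl
      | c :: l2'', hl2 =>
        have h2 : (c :: l2'').getLast? = some t := by simpa using hl2
        rw [h2]; rfl
    · exact List.mem_append.mpr (Or.inl (List.mem_of_getLast? hl1))

lemma extreme_endpoint (hT : G.IsTree) (hA : Oriented A)
    (horient : ∀ u v, G.Adj u v ↔ (A u v ∨ A v u)) {u v w : V} {l : List V}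
    (h : DiwalkFrom A u v l) (hw : IsExtremeVtx A w) (hmem : w ∈ l) : w = u ∨ w = v := by
  obtain ⟨l1, l2, rfl⟩ := List.append_of_mem hmem
  rcases l1.eq_nil_or_concat with rfl | ⟨l1', p, rfl⟩
  · left
    have := h.2.1
    simpa using this
  · rcases l2 with _ | ⟨s, l2'⟩
    · right
      have h2 : some w = some v := by
        rw [← h.2.2]
        exact (List.getLast?_concat).symm
      simpa using h2
    · exfalso
      have hc' : List.Chain' A (l1' ++ p :: w :: s :: l2') := by
        have := h.1
        simpa [List.append_assoc] using this
      obtain ⟨h1, h2, h3⟩ := List.isChain_append.mp hc'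
      obtain ⟨hpw, h2'⟩ := List.isChain_cons_cons.mp h2
      obtain ⟨hws, h2''⟩ := List.isChain_cons_cons.mp h2'
      rcases hw with hsrc | hsink | ⟨-, -, htr⟩
      · exact hsrc p hpw
      · exact hsink s hws
      have hps : A p s := htr p s hpw hws
      have hd2 : DiwalkFrom A u v (l1' ++ p :: s :: l2') := by
        refine ⟨List.isChain_append.mpr ⟨h1, List.isChain_cons_cons.mpr ⟨hps, h2''⟩, ?_⟩, ?_, ?_⟩
        · intro x hx y hy
          have hyp : p = y := by simpa using hy
          exact hyp ▸ h3 x hx p (by simp)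
        · have := h.2.1
          rw [List.head?_append] at this ⊢
          simpa using this
        · have := h.2.2
          rw [List.getLast?_append] at this ⊢
          simpa [List.getLast?_cons] using this
      have len1 := diwalk_length hT hA horient h
      have len2 := diwalk_length hT hA horient hd2
      simp only [List.length_append, List.length_cons, List.length_concat] at len1 len2
      omega

end Aux2

/-- in an oriented tree, the extreme vertices form the unique minimum
hull set and the unique minimum geodetic set; `I(ext(D)) = V(D)` and
`ohn(D) = ogn(D) = |ext(D)|`. -/
theorem stmt_11 [Fintype V] (G : SimpleGraph V) (hT : G.IsTree)
    (A : V → V → Prop) (hA : Oriented A)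
    (horient : ∀ u v, G.Adj u v ↔ (A u v ∨ A v u)) :
    IsGeodeticSet A {v | IsExtremeVtx A v} ∧
    IsHullSet A {v | IsExtremeVtx A v} ∧
    (∀ S : Set V, IsHullSet A S → {v | IsExtremeVtx A v} ⊆ S) ∧
    (∀ S : Set V, IsGeodeticSet A S → {v | IsExtremeVtx A v} ⊆ S) ∧
    hullNumber A = ({v | IsExtremeVtx A v} : Set V).ncard ∧
    geodeticNumber A = ({v | IsExtremeVtx A v} : Set V).ncard := by
  set E : Set V := {v | IsExtremeVtx A v} with hE
  have hGeo : IsGeodeticSet A E := by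
    apply Set.eq_univ_of_forall
    intro w
    obtain ⟨s, t, l, hd, hs, ht, hw⟩ := exists_thru hT hA horient w
    simp only [geoInterval, Set.mem_union, Set.mem_setOf_eq]
    exact Or.inr ⟨s, Or.inl hs, t, Or.inr (Or.inl ht), l,
      diwalk_isGeodesic hT hA horient hd, hw⟩
  have hsubhull : ∀ S : Set V, geoInterval A S ⊆ geoHull A S := by
    intro S x hx
    refine Set.mem_sInter.mpr ?_
    rintro T ⟨hST, hconv⟩
    rw [← hconv]
    simp only [geoInterval, Set.mem_union, Set.mem_setOf_eq] at hx ⊢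
    rcases hx with hx | ⟨a, ha, b, hb, m, hm, hxm⟩
    · exact Or.inl (hST hx)
    · exact Or.inr ⟨a, hST ha, b, hST hb, m, hm, hxm⟩
  have hHull : IsHullSet A E := by
    have hGeo' : geoInterval A E = Set.univ := hGeo
    apply Set.eq_univ_of_univ_subset
    rw [← hGeo']
    exact hsubhull E
  have hconvex : ∀ w, IsExtremeVtx A w → GeoConvex A (Set.univ \ {w}) := by
    intro w hw
    apply subset_antisymm ?_ Set.subset_union_left
    intro x hx
    simp only [geoInterval, Set.mem_union, Set.mem_setOf_eq] at hx
    rcases hx with hx | ⟨a, ha, b, hb, m, hm, hxm⟩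
    · exact hx
    · refine ⟨trivial, ?_⟩
      simp only [Set.mem_singleton_iff]
      intro hxw
      subst hxw
      rcases extreme_endpoint hT hA horient hm.1 hw hxm with rfl | rfl
      · exact ha.2 rfl
      · exact hb.2 rfl
  have hmin : ∀ S : Set V, IsHullSet A S → E ⊆ S := by
    intro S hS w hw
    by_contra hwS
    have hsub : S ⊆ Set.univ \ {w} :=
      fun x hx => ⟨trivial, fun hxw => hwS ((Set.mem_singleton_iff.mp hxw) ▸ hx)⟩
    have hsubT : geoHull A S ⊆ Set.univ \ {w} :=
      Set.sInter_subset_of_mem ⟨hsub, hconvex w hw⟩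
    rw [hS] at hsubT
    exact (hsubT (Set.mem_univ w)).2 rfl
  have hgmin : ∀ S : Set V, IsGeodeticSet A S → E ⊆ S := by
    intro S hS
    apply hmin S
    have hS' : geoInterval A S = Set.univ := hS
    apply Set.eq_univ_of_univ_subset
    rw [← hS']
    exact hsubhull S
  have hEfin : E.Finite := Set.toFinite E
  have hnum : hullNumber A = E.ncard := by
    apply le_antisymm
    · exact Nat.sInf_le ⟨E, hEfin, rfl, hHull⟩
    · refine le_csInf ⟨E.ncard, E, hEfin, rfl, hHull⟩ ?_
      rintro n ⟨S, hSfin, rfl, hS⟩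
      exact Set.ncard_le_ncard (hmin S hS) hSfin
  have hnum2 : geodeticNumber A = E.ncard := by
    apply le_antisymm
    · exact Nat.sInf_le ⟨E, hEfin, rfl, hGeo⟩
    · refine le_csInf ⟨E.ncard, E, hEfin, rfl, hGeo⟩ ?_
      rintro n ⟨S, hSfin, rfl, hS⟩
      exact Set.ncard_le_ncard (hgmin S hS) hSfin
  exact ⟨hGeo, hHull, hmin, hgmin, hnum, hnum2⟩
end

section
/- Let D be an oriented cactus, u,v ∈ V(D), and P a directed (u,v)-path containing a vertex w that does not belong to any cycle of D. Then every directed (u,v)-path in D contains w. -/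
variable {V : Type*}

/-- A cactus: connected, and any two cycles sharing an edge have the same edge set
(i.e., every edge lies in at most one cycle). -/
def IsCactus {V : Type*} (G : SimpleGraph V) : Prop :=
  G.Connected ∧ ∀ ⦃x y : V⦄ (c₁ : G.Walk x x) (c₂ : G.Walk y y),
    c₁.IsCycle → c₂.IsCycle → (∃ e, e ∈ c₁.edges ∧ e ∈ c₂.edges) →
    (∀ e, e ∈ c₁.edges ↔ e ∈ c₂.edges)

/-- `v` is a cut-vertex of the connected graph `G`. -/
def IsCutVertex {V : Type*} (G : SimpleGraph V) (v : V) : Prop :=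
  G.Connected ∧ ¬ (G.induce {w | w ≠ v}).Connected


private lemma chain'_imp_mem {R S : V → V → Prop} :
    ∀ {m : List V}, m.Chain' R → (∀ x ∈ m, ∀ y ∈ m, R x y → S x y) → m.Chain' S
  | [], _, _ => List.isChain_nil
  | [_], _, _ => List.isChain_singleton _
  | x :: y :: t, h, hmem => by
      rw [List.Chain', List.isChain_cons_cons] at h ⊢
      exact ⟨hmem x (by simp) y (by simp) h.1,
        chain'_imp_mem h.2 (fun a ha b hb => hmem a (List.mem_cons_of_mem _ ha)
          b (List.mem_cons_of_mem _ hb))⟩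

private lemma reach_of_chain' {H : SimpleGraph V} :
    ∀ (m : List V) {a b : V}, m.Chain' H.Adj → m.head? = some a → m.getLast? = some b →
      H.Reachable a b
  | [], a, b, _, ha, _ => by simp at ha
  | [x], a, b, _, ha, hb => by
      simp only [List.head?_cons, Option.some.injEq] at ha
      simp only [List.getLast?_singleton, Option.some.injEq] at hb
      exact ha ▸ hb ▸ SimpleGraph.Reachable.refl x
  | x :: y :: t, a, b, h, ha, hb => by
      simp only [List.head?_cons, Option.some.injEq] at ha
      rw [List.Chain', List.isChain_cons_cons] at h
      exact ha ▸ (h.1.reachable.trans (reach_of_chain' (y :: t) h.2 rfl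
        (by rw [List.getLast?_cons_cons] at hb; exact hb)))

/-- in an oriented cactus, if a directed `(u,v)`-path contains a vertex
`w` lying on no cycle, then every directed `(u,v)`-path contains `w`. -/
theorem stmt_15 (G : SimpleGraph V) (hG : IsCactus G)
    (A : V → V → Prop) (hA : Oriented A)
    (horient : ∀ u v, G.Adj u v ↔ (A u v ∨ A v u))
    (u v w : V) (l : List V) (hl : DiwalkFrom A u v l) (hnd : l.Nodup) (hw : w ∈ l)
    (hnc : ∀ (x : V) (c : G.Walk x x), c.IsCycle → w ∉ c.support) :
    ∀ l', DiwalkFrom A u v l' → l'.Nodup → w ∈ l' := by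
  classical
  obtain ⟨hchain, hhead, hlast⟩ := hl
  intro l' hl' hnd'
  obtain ⟨hchain', hhead', hlast'⟩ := hl'
  by_contra hwl'
  have hwu : w ≠ u := by
    rintro rfl
    exact hwl' (List.mem_of_mem_head? (by rw [hhead']; exact rfl))
  -- decompose l around w
  obtain ⟨s, t, rfl⟩ := List.append_of_mem hw
  have hs : s ≠ [] := by
    rintro rfl
    exact hwu (by simpa using hhead)
  obtain ⟨s', p, rfl⟩ : ∃ s' p, s = s' ++ [p] := by
    rcases List.eq_nil_or_concat s with h | ⟨s', p, h⟩
    · exact absurd h hs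
    · exact ⟨s', p, by simpa [List.concat_eq_append] using h⟩
  rw [List.append_assoc, List.singleton_append] at hchain hhead hlast hnd hw
  -- nodup facts
  have hnd2 : (p :: w :: t).Nodup := hnd.of_append_right
  have hpwt : p ∉ w :: t := (List.nodup_cons.1 hnd2).1
  have hdisj := List.disjoint_of_nodup_append hnd
  have hws' : w ∉ s' := fun hmem => hdisj hmem (by simp)
  have hwp : w ≠ p := fun h => hpwt (h ▸ List.mem_cons_self)
  -- chains on the pieces
  have hsuf : (p :: w :: t).Chain' A := hchain.suffix (List.suffix_append s' _)
  have hApw : A p w := (List.isChain_cons_cons.1 hsuf).1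
  have hcwt : (w :: t).Chain' A := (List.isChain_cons_cons.1 hsuf).2
  have hcpre : (s' ++ [p]).Chain' A := by
    refine hchain.prefix ⟨w :: t, ?_⟩
    rw [List.append_assoc, List.singleton_append]
  -- the graph with edge {p,w} deleted
  set G' : SimpleGraph V := G.deleteEdges {s(p, w)} with hG'
  have key : ∀ (m : List V), m.Chain' A → (p ∉ m ∨ w ∉ m) → m.Chain' G'.Adj := by
    intro m hm hpm
    refine chain'_imp_mem hm ?_
    intro x hx y hy hxy
    rw [hG', SimpleGraph.deleteEdges_adj]
    refine ⟨(horient x y).2 (Or.inl hxy), ?_⟩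
    simp only [Set.mem_singleton_iff, Sym2.eq_iff]
    rintro (⟨rfl, rfl⟩ | ⟨rfl, rfl⟩) <;> rcases hpm with h | h <;> exact h ‹_›
  have R1 : G'.Reachable w v :=
    reach_of_chain' (w :: t) (key _ hcwt (Or.inl hpwt)) rfl
      (by rw [← List.getLast?_append_of_ne_nil (s' ++ [p]) (l₂ := w :: t) (by simp),
            List.append_assoc, List.singleton_append]; exact hlast)
  have R2 : G'.Reachable u v :=
    reach_of_chain' l' (key _ hchain' (Or.inr hwl')) hhead' hlast'
  have R3 : G'.Reachable u p :=
    reach_of_chain' (s' ++ [p]) (key _ hcpre (Or.inr (by simp [hws', hwp])))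
      (by rw [← List.head?_append_of_ne_nil (s' ++ [p]) (l₂ := w :: t) (by simp),
            List.append_assoc, List.singleton_append]; exact hhead)
      (by simp)
  have hr : G'.Reachable w p := R1.trans (R2.symm.trans R3)
  obtain ⟨W⟩ := hr
  let P : G'.Path w p := W.toPath
  have hP : (P : G'.Walk w p).IsPath := P.2
  have hle : G' ≤ G := SimpleGraph.deleteEdges_le _
  let Q : G.Walk w p := (P : G'.Walk w p).mapLe hle
  have hQ : Q.IsPath := (SimpleGraph.Walk.mapLe_isPath hle).2 hP
  have hQe : s(p, w) ∉ Q.edges := by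
    intro hmem
    have h1 : s(p, w) ∈ (P : G'.Walk w p).edges := by
      simpa only [Q, SimpleGraph.Walk.mapLe, SimpleGraph.Walk.edges_map,
        SimpleGraph.Hom.coe_ofLE, List.mem_map] using
        (by simpa only [Q, SimpleGraph.Walk.mapLe, SimpleGraph.Walk.edges_map, List.mem_map,
            SimpleGraph.Hom.coe_ofLE, Sym2.map_id, Sym2.map_id', id_eq,
            exists_eq_right] using hmem : s(p, w) ∈ (P : G'.Walk w p).edges)
    have h2 := (P : G'.Walk w p).edges_subset_edgeSet h1
    rw [hG', SimpleGraph.edgeSet_deleteEdges] at h2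
    exact h2.2 rfl
  have hadj : G.Adj p w := (horient p w).2 (Or.inl hApw)
  have hc : (SimpleGraph.Walk.cons hadj Q).IsCycle :=
    (SimpleGraph.Walk.cons_isCycle_iff Q hadj).2 ⟨hQ, hQe⟩
  exact hnc p _ hc (List.mem_cons_of_mem _ Q.start_mem_support)
end

section
/- Let D be an oriented cactus, C ⊆ D a cycle, and P a directed (u,v)-path intersecting C in a subpath with endpoints w1 (first) and wq (last), where the intersection has at least 2 vertices. Then for every directed (u,v)-path P* in D, the intersection P* ∩ C is a directed (w1,wq)-path; in particular every (u,v)-path enters C at w1 and leaves at wq. -/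
variable {V : Type*}

open SimpleGraph

section Aux
variable {V : Type*} {G : SimpleGraph V}

lemma walk_getLast? {a b : V} (p : G.Walk a b) : p.support.getLast? = some b := by
  induction p with
  | nil => rfl
  | cons h q ih =>
    rw [Walk.support_cons, q.support_eq_cons, List.getLast?_cons_cons, ← q.support_eq_cons, ih]

lemma walk_len0 {a b : V} (p : G.Walk a b) (h : p.length = 0) : a = b := by
  cases p with
  | nil => rfl
  | cons h q => simp [Walk.length_cons] at h

lemma path_loop {t : V} (p : G.Walk t t) (hp : p.IsPath) : p.length = 0 := by
  cases p with
  | nil => rfl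
  | cons h q =>
    exfalso
    have hnd := hp.support_nodup
    rw [Walk.support_cons] at hnd
    exact (List.nodup_cons.1 hnd).1 q.end_mem_support

lemma chain_to_walk : ∀ (l : List V) (a b : V), l.Chain' G.Adj → l.head? = some a →
    l.getLast? = some b → ∃ p : G.Walk a b, p.support = l := by
  intro l
  induction l with
  | nil => intro a b _ h; simp at h
  | cons x t ih =>
    intro a b hch hh hl
    have hax : x = a := by simpa using hh
    subst hax
    cases t with
    | nil =>
      have : x = b := by simpa using hl
      subst this
      exact ⟨Walk.nil, rfl⟩
    | cons y t' =>
      rw [List.Chain', List.isChain_cons_cons] at hch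
      have hl' : (y :: t').getLast? = some b := by
        rw [List.getLast?_cons_cons] at hl; exact hl
      obtain ⟨p, hp⟩ := ih y b hch.2 rfl hl'
      exact ⟨Walk.cons hch.1 p, by rw [Walk.support_cons, hp]⟩

/-- If `s(a,x)` is an edge of a walk starting at `a` with nodup support, then
`x` is the second vertex. -/
lemma edge_head {a b x : V} (W : G.Walk a b) (hnd : W.support.Nodup)
    (hmem : s(a, x) ∈ W.edges) : W.support.tail.head? = some x := by
  induction W with
  | nil => simp at hmem
  | cons h q ih =>
    rename_i u' v' w' 
    rw [Walk.edges_cons, List.mem_cons] at hmem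
    rw [Walk.support_cons] at hnd
    rcases hmem with hmem | hmem
    · have := Sym2.eq_iff.1 hmem
      rcases this with ⟨-, rfl⟩ | ⟨rfl, rfl⟩
      · rw [Walk.support_cons, List.tail_cons, q.support_eq_cons]; rfl
      · rw [Walk.support_cons, List.tail_cons, q.support_eq_cons]; rfl
    · exfalso
      exact (List.nodup_cons.1 hnd).1 (q.fst_mem_support_of_mem_edges hmem)

end Aux

section Aux2
variable {V : Type*} [DecidableEq V] {G : SimpleGraph V}

lemma closed_start_mem_tail {x : V} (c : G.Walk x x) (hnil : c ≠ Walk.nil) :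
    x ∈ c.support.tail := by
  cases c with
  | nil => exact absurd rfl hnil
  | cons h q => simpa using q.end_mem_support

lemma cycle_path {x s t : V} (c : G.Walk x x) (hc : c.IsCycle)
    (ht : t ∈ c.support) (hs : s ∈ c.support) (hne : t ≠ s) :
    ∃ Q : G.Walk t s, Q.IsPath ∧ (∀ z ∈ Q.support, z ∈ c.support) ∧
      (∀ e ∈ Q.edges, e ∈ c.edges) ∧ 1 ≤ Q.length := by
  set d := c.rotate t ht with hd_def
  have hd : d.IsCycle := hc.rotate ht
  have hstail : s ∈ c.support.tail := by
    rw [c.support_eq_cons, List.mem_cons] at hs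
    rcases hs with rfl | hs
    · exact closed_start_mem_tail c hc.ne_nil
    · exact hs
  have hsdtail : s ∈ d.support.tail :=
    ((Walk.support_rotate c t ht).perm.mem_iff).2 hstail
  have hsd : s ∈ d.support := by
    rw [d.support_eq_cons]; exact List.mem_cons_of_mem _ hsdtail
  set Q := d.takeUntil s hsd with hQ_def
  have hspec : Q.support ++ (d.dropUntil s hsd).support.tail = d.support := by
    have := congrArg Walk.support (d.take_spec hsd)
    rwa [Walk.support_append] at this
  set B := (d.dropUntil s hsd).support.tail with hB_def
  have hBne : B ≠ [] := by
    intro hB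
    have h1 : (d.dropUntil s hsd).support = [s] := by
      rw [(d.dropUntil s hsd).support_eq_cons, ← hB_def, hB]
    have h2 : (d.dropUntil s hsd).length = 0 := by
      have := (d.dropUntil s hsd).length_support
      rw [h1] at this
      simpa using this.symm
    exact hne ((walk_len0 _ h2).symm)
  have hQB : Q.support.tail ++ B = d.support.tail := by
    have h1 := hspec
    rw [Q.support_eq_cons, d.support_eq_cons, List.cons_append] at h1
    injection h1
  have hdtail : d.support.tail.Nodup := hd.support_nodup
  have hnd2 : (Q.support.tail ++ B).Nodup := hQB ▸ hdtail
  have htB : t ∈ B := by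
    obtain ⟨b0, B', hBeq⟩ := List.exists_cons_of_ne_nil hBne
    have h3 : (d.dropUntil s hsd).support.getLast? = some t := walk_getLast? _
    rw [(d.dropUntil s hsd).support_eq_cons, ← hB_def, hBeq, List.getLast?_cons_cons] at h3
    rw [hBeq]
    exact List.mem_of_getLast? h3
  have hQnd : Q.support.Nodup := by
    rw [Q.support_eq_cons, List.nodup_cons]
    refine ⟨fun hmem => ?_, (List.nodup_append'.mp hnd2).1⟩
    exact absurd htB ((List.nodup_append'.mp hnd2).2.2 hmem)
  refine ⟨Q, Walk.IsPath.mk' hQnd, ?_, ?_, ?_⟩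
  · intro z hz
    rw [Q.support_eq_cons, List.mem_cons] at hz
    rcases hz with rfl | hz
    · exact ht
    · have : z ∈ d.support.tail := hQB ▸ List.mem_append_left _ hz
      have : z ∈ c.support.tail := ((Walk.support_rotate c t ht).perm.mem_iff).1 this
      rw [c.support_eq_cons]
      exact List.mem_cons_of_mem _ this
  · intro e he
    exact ((Walk.rotate_edges c t ht).perm.mem_iff).1 (d.edges_takeUntil_subset hsd he)
  · rw [Nat.one_le_iff_ne_zero]
    intro h0
    exact hne (walk_len0 _ h0)

end Aux2

section Aux3
variable {V : Type*} [DecidableEq V] {G : SimpleGraph V}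

lemma no_outside_path {x s t : V} {c : G.Walk x x} (hG : IsCactus G) (hc : c.IsCycle)
    (hs : s ∈ c.support) (ht : t ∈ c.support)
    (R : G.Walk s t) (hR : R.IsPath)
    (hint : ∀ z ∈ R.support, z ∈ c.support → z = s ∨ z = t)
    (hlen : 2 ≤ R.length) : False := by
  have hst : s ≠ t := by
    rintro rfl
    have := path_loop R hR
    omega
  have hedge_st : s(s, t) ∉ R.edges := by
    intro hmem
    have h1 := edge_head R hR.support_nodup hmem
    cases R with
    | nil => simp at hlen
    | cons h R₂ =>
      rw [Walk.support_cons, List.tail_cons] at h1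
      rw [R₂.support_eq_cons] at h1
      have hzt : _ = t := Option.some_injective _ h1
      subst hzt
      have := path_loop R₂ hR.of_cons
      rw [Walk.length_cons] at hlen
      omega
  obtain ⟨Q, hQpath, hQsup, hQedges, hQlen⟩ := cycle_path c hc ht hs (Ne.symm hst)
  set c' := R.append Q with hc'_def
  have hRQdisj : ∀ e, e ∈ R.edges → e ∈ Q.edges → False := by
    intro e heR heQ
    induction e using Sym2.ind with
    | _ p q =>
      have hpR : p ∈ R.support := R.fst_mem_support_of_mem_edges heR
      have hqR : q ∈ R.support := R.snd_mem_support_of_mem_edges heR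
      have hpC : p ∈ c.support := hQsup p (Q.fst_mem_support_of_mem_edges heQ)
      have hqC : q ∈ c.support := hQsup q (Q.snd_mem_support_of_mem_edges heQ)
      have hpq : p ≠ q := G.ne_of_adj (R.adj_of_mem_edges heR)
      rcases hint p hpR hpC with rfl | rfl <;> rcases hint q hqR hqC with rfl | rfl
      · exact hpq rfl
      · exact hedge_st heR
      · exact hedge_st (Sym2.eq_swap ▸ heR)
      · exact hpq rfl
  have hc'cyc : c'.IsCycle := by
    rw [Walk.isCycle_def]
    refine ⟨?_, ?_, ?_⟩
    · rw [Walk.isTrail_def, Walk.edges_append, List.nodup_append']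
      exact ⟨hR.isTrail.edges_nodup, hQpath.isTrail.edges_nodup,
        fun e he he' => hRQdisj e he he'⟩
    · intro hnil
      have := congrArg Walk.length hnil
      rw [Walk.length_append] at this
      simp only [Walk.length_nil] at this
      omega
    · rw [Walk.tail_support_append, List.nodup_append']
      refine ⟨List.Nodup.of_cons (R.support_eq_cons ▸ hR.support_nodup), ?_, ?_⟩
      · exact List.Nodup.of_cons (Q.support_eq_cons ▸ hQpath.support_nodup)
      · intro z hzR hzQ
        have hzRs : z ∈ R.support := by
          rw [R.support_eq_cons]; exact List.mem_cons_of_mem _ hzR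
        have hzC : z ∈ c.support := hQsup z (by
          rw [Q.support_eq_cons]; exact List.mem_cons_of_mem _ hzQ)
        have hzs : z ≠ s := by
          intro rfl'
          subst rfl'
          have := R.support_eq_cons ▸ hR.support_nodup
          exact (List.nodup_cons.1 this).1 hzR
        rcases hint z hzRs hzC with rfl | rfl
        · exact hzs rfl
        · have := Q.support_eq_cons ▸ hQpath.support_nodup
          exact (List.nodup_cons.1 this).1 hzQ
  have hQe_ne : Q.edges ≠ [] := by
    intro h
    have := Q.length_edges
    rw [h] at this
    simp at this
    omega
  have he₀ : Q.edges.head hQe_ne ∈ c.edges := hQedges _ (List.head_mem hQe_ne)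
  have he₀' : Q.edges.head hQe_ne ∈ c'.edges := by
    rw [Walk.edges_append]
    exact List.mem_append_right _ (List.head_mem hQe_ne)
  have hiff := hG.2 c' c hc'cyc hc ⟨_, he₀', he₀⟩
  -- first edge of R
  cases R with
  | nil => simp at hlen
  | cons h R₂ =>
    rename_i z
    have hz_ne_t : z ≠ t := by
      rintro rfl
      have := path_loop R₂ hR.of_cons
      rw [Walk.length_cons] at hlen
      omega
    have hz_ne_s : z ≠ s := (G.ne_of_adj h).symm
    have hz_mem : z ∈ (Walk.cons h R₂).support := by
      rw [Walk.support_cons]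
      exact List.mem_cons_of_mem _ R₂.start_mem_support
    have hz_notc : z ∉ c.support := by
      intro hzc
      rcases hint z hz_mem hzc with h1 | h1
      · exact hz_ne_s h1
      · exact hz_ne_t h1
    have hfirst : s(s, z) ∈ c'.edges := by
      rw [hc'_def, Walk.edges_append]
      exact List.mem_append_left _ (by rw [Walk.edges_cons]; exact List.mem_cons_self)
    have : s(s, z) ∈ c.edges := (hiff _).1 hfirst
    exact hz_notc (c.snd_mem_support_of_mem_edges this)

lemma lemK {x s t : V} {c : G.Walk x x} (hG : IsCactus G) (hc : c.IsCycle)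
    (hs : s ∈ c.support) (ht : t ∈ c.support)
    (W : G.Walk s t) (hWs : ∀ z ∈ W.support, z ∈ c.support → z = s ∨ z = t) :
    s = t ∨ s(s, t) ∈ W.edges := by
  by_cases hst : s = t
  · exact Or.inl hst
  right
  obtain ⟨R, hRsub, hResub, hRpath⟩ :
      ∃ R : G.Walk s t, R.support ⊆ W.support ∧ R.edges ⊆ W.edges ∧ R.IsPath :=
    ⟨W.bypass, W.support_bypass_subset, W.edges_bypass_subset, W.bypass_isPath⟩
  have hint : ∀ z ∈ R.support, z ∈ c.support → z = s ∨ z = t :=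
    fun z hz => hWs z (hRsub hz)
  cases R with
  | nil => exact absurd rfl hst
  | cons h R₂ =>
    rename_i z
    by_cases hzt : z = t
    · subst hzt
      exact hResub (by rw [Walk.edges_cons]; exact List.mem_cons_self)
    · exfalso
      have hR₂len : R₂.length ≠ 0 := fun h0 => hzt (walk_len0 _ h0)
      exact no_outside_path hG hc hs ht (Walk.cons h R₂) hRpath hint
        (by rw [Walk.length_cons]; omega)

end Aux3



section Aux4
variable {V : Type*} [DecidableEq V] {G : SimpleGraph V}

lemma filter_head_split (p : V → Bool) (l : List V) (w : V)
    (h : (l.filter p).head? = some w) :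
    ∃ l₀ l₁, l = l₀ ++ w :: l₁ ∧ (∀ z ∈ l₀, ¬ p z) ∧ p w := by
  cases hf : l.filter p with
  | nil => rw [hf] at h; simp at h
  | cons a as =>
    rw [hf] at h
    have haw : a = w := by simpa using h
    subst haw
    obtain ⟨l₀, l₁, rfl, h1, h2, -⟩ := List.filter_eq_cons_iff.1 hf
    exact ⟨l₀, l₁, rfl, h1, h2⟩

lemma entry_unique {x : V} {c : G.Walk x x} (hG : IsCactus G) (hc : c.IsCycle)
    (u : V) (l l' : List V)
    (hch : l.Chain' G.Adj) (hch' : l'.Chain' G.Adj)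
    (hu : l.head? = some u) (hu' : l'.head? = some u)
    (w w' : V)
    (hw : (l.filter (fun z => z ∈ c.support)).head? = some w)
    (hw' : (l'.filter (fun z => z ∈ c.support)).head? = some w') : w = w' := by
  obtain ⟨l₀, l₁, rfl, h0, hwS⟩ := filter_head_split _ l w hw
  obtain ⟨l₀', l₁', rfl, h0', hwS'⟩ := filter_head_split _ l' w' hw'
  have h0'' : ∀ z ∈ l₀, z ∉ c.support := fun z hz => by simpa using h0 z hz
  have h0''' : ∀ z ∈ l₀', z ∉ c.support := fun z hz => by simpa using h0' z hz
  have hwSS : w ∈ c.support := by simpa using hwS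
  have hwSS' : w' ∈ c.support := by simpa using hwS'
  have hpre : (l₀ ++ [w]) <+: (l₀ ++ w :: l₁) := ⟨l₁, by simp⟩
  have hpre' : (l₀' ++ [w']) <+: (l₀' ++ w' :: l₁') := ⟨l₁', by simp⟩
  have hh : (l₀ ++ [w]).head? = some u := by
    rw [List.head?_append] at hu ⊢
    simpa using hu
  have hh' : (l₀' ++ [w']).head? = some u := by
    rw [List.head?_append] at hu' ⊢
    simpa using hu'
  obtain ⟨p₁, hp₁⟩ := chain_to_walk (l₀ ++ [w]) u w (hch.prefix hpre) hh
    List.getLast?_concat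
  obtain ⟨p₂, hp₂⟩ := chain_to_walk (l₀' ++ [w']) u w' (hch'.prefix hpre') hh'
    List.getLast?_concat
  set W := p₁.reverse.append p₂ with hW_def
  have hWs : ∀ z ∈ W.support, z ∈ c.support → z = w ∨ z = w' := by
    intro z hz hzc
    rw [hW_def, Walk.mem_support_append_iff, Walk.support_reverse, List.mem_reverse,
      hp₁, hp₂] at hz
    rcases hz with hz | hz <;> rw [List.mem_append] at hz
    · rcases hz with hz | hz
      · exact absurd hzc (h0'' z hz)
      · exact Or.inl (by simpa using hz)
    · rcases hz with hz | hz
      · exact absurd hzc (h0''' z hz)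
      · exact Or.inr (by simpa using hz)
  rcases lemK hG hc hwSS hwSS' W hWs with heq | hedge
  · exact heq
  · rw [hW_def, Walk.edges_append, List.mem_append, Walk.edges_reverse,
      List.mem_reverse] at hedge
    rcases hedge with hedge | hedge
    · have : w' ∈ p₁.support := p₁.snd_mem_support_of_mem_edges hedge
      rw [hp₁, List.mem_append] at this
      rcases this with h | h
      · exact absurd hwSS' (h0'' _ h)
      · exact (by simpa using h : w' = w).symm
    · have : w ∈ p₂.support := p₂.fst_mem_support_of_mem_edges hedge
      rw [hp₂, List.mem_append] at this
      rcases this with h | h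
      · exact absurd hwSS (h0''' _ h)
      · simpa using h

end Aux4



section Aux5
variable {V : Type*} [DecidableEq V] {G : SimpleGraph V}

lemma meets_cycle {x : V} {c : G.Walk x x} (hG : IsCactus G) (hc : c.IsCycle)
    (u v : V) (l l' : List V)
    (hch : l.Chain' G.Adj) (hch' : l'.Chain' G.Adj)
    (hu : l.head? = some u) (hv : l.getLast? = some v)
    (hu' : l'.head? = some u) (hv' : l'.getLast? = some v)
    (w1 wq : V)
    (hw1 : (l.filter (fun z => z ∈ c.support)).head? = some w1)
    (hwq : (l.filter (fun z => z ∈ c.support)).getLast? = some wq)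
    (hne : w1 ≠ wq) :
    l'.filter (fun z => z ∈ c.support) ≠ [] := by
  intro hemp
  have hl'S : ∀ z ∈ l', z ∉ c.support := by
    intro z hz
    have := List.filter_eq_nil_iff.1 hemp z hz
    simpa using this
  obtain ⟨l₀, l₁, hleq, h0, hw1S⟩ := filter_head_split _ l w1 hw1
  have hw1SS : w1 ∈ c.support := by simpa using hw1S
  have h0' : ∀ z ∈ l₀, z ∉ c.support := fun z hz => by simpa using h0 z hz
  -- rear decomposition via reverse
  have hrev : (l.reverse.filter (fun z => z ∈ c.support)).head? = some wq := by
    rw [List.filter_reverse, List.head?_reverse]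
    exact hwq
  obtain ⟨m₀, m₁, hlrev, hm0, hwqS⟩ := filter_head_split _ l.reverse wq hrev
  have hwqSS : wq ∈ c.support := by simpa using hwqS
  have hm0' : ∀ z ∈ m₀, z ∉ c.support := fun z hz => by simpa using hm0 z hz
  have hleq2 : l = m₁.reverse ++ wq :: m₀.reverse := by
    have := congrArg List.reverse hlrev
    simpa using this
  -- walk p₁ : u → w1
  have hh : (l₀ ++ [w1]).head? = some u := by
    rw [hleq, List.head?_append] at hu
    rw [List.head?_append]
    simpa using hu
  have hpre : (l₀ ++ [w1]) <+: l := by rw [hleq]; exact ⟨l₁, by simp⟩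
  obtain ⟨p₁, hp₁⟩ := chain_to_walk (l₀ ++ [w1]) u w1
    (hch.prefix hpre) hh List.getLast?_concat
  -- walk p₃ : wq → v
  have hgl : (wq :: m₀.reverse).getLast? = some v := by
    rw [hleq2, List.getLast?_append_of_ne_nil _ (by simp)] at hv
    exact hv
  obtain ⟨p₃, hp₃⟩ := chain_to_walk (wq :: m₀.reverse) wq v
    (hch.suffix ⟨m₁.reverse, hleq2.symm⟩) rfl hgl
  -- walk p' : u → v along l'
  obtain ⟨p', hp'⟩ := chain_to_walk l' u v hch' hu' hv'
  set W := p₁.reverse.append (p'.append p₃.reverse) with hW_def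
  have hWs : ∀ z ∈ W.support, z ∈ c.support → z = w1 ∨ z = wq := by
    intro z hz hzc
    rw [hW_def, Walk.mem_support_append_iff, Walk.mem_support_append_iff,
      Walk.support_reverse, Walk.support_reverse, List.mem_reverse, List.mem_reverse,
      hp₁, hp₃, hp'] at hz
    rcases hz with hz | hz | hz
    · rw [List.mem_append] at hz
      rcases hz with hz | hz
      · exact absurd hzc (h0' z hz)
      · exact Or.inl (by simpa using hz)
    · exact absurd hzc (hl'S z hz)
    · rcases List.mem_cons.1 hz with hz | hz
      · exact Or.inr hz
      · exact absurd hzc (hm0' z (by simpa using hz))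
  rcases lemK hG hc hw1SS hwqSS W hWs with heq | hedge
  · exact hne heq
  · rw [hW_def, Walk.edges_append, Walk.edges_append, Walk.edges_reverse,
      Walk.edges_reverse, List.mem_append, List.mem_append, List.mem_reverse,
      List.mem_reverse] at hedge
    rcases hedge with hedge | hedge | hedge
    · have : wq ∈ p₁.support := p₁.snd_mem_support_of_mem_edges hedge
      rw [hp₁, List.mem_append] at this
      rcases this with h | h
      · exact absurd hwqSS (h0' _ h)
      · have hqw : wq = w1 := by simpa using h
        exact hne hqw.symm
    · have : w1 ∈ p'.support := p'.fst_mem_support_of_mem_edges hedge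
      rw [hp'] at this
      exact absurd hw1SS (hl'S _ this)
    · have : w1 ∈ p₃.support := p₃.fst_mem_support_of_mem_edges hedge
      rw [hp₃] at this
      rcases List.mem_cons.1 this with h | h
      · exact hne h
      · exact absurd hw1SS (hm0' _ (by simpa using h))

lemma seg_lemma {x : V} {c : G.Walk x x} (hG : IsCactus G) (hc : c.IsCycle)
    (l' m₁ m₂ m₃ : List V) (a b : V)
    (heq : l' = m₁ ++ a :: (m₂ ++ b :: m₃))
    (hnd : l'.Nodup) (hch : l'.Chain' G.Adj)
    (haS : a ∈ c.support) (hbS : b ∈ c.support)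
    (hm₂ : ∀ z ∈ m₂, z ∉ c.support) : m₂ = [] := by
  have hinf : (a :: (m₂ ++ [b])) <:+: l' := ⟨m₁, m₃, by rw [heq]; simp⟩
  have hchs : (a :: (m₂ ++ [b])).Chain' G.Adj := hch.infix hinf
  have hnds : (a :: (m₂ ++ [b])).Nodup := hnd.sublist hinf.sublist
  have hab : a ≠ b := by
    intro h
    subst h
    exact (List.nodup_cons.1 hnds).1 (List.mem_append_right _ (List.mem_singleton_self _))
  have hgl : (a :: (m₂ ++ [b])).getLast? = some b := by
    have : a :: (m₂ ++ [b]) = (a :: m₂) ++ [b] := by simp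
    rw [this, List.getLast?_concat]
  obtain ⟨Wg, hWg⟩ := chain_to_walk (a :: (m₂ ++ [b])) a b hchs rfl hgl
  have hWs : ∀ z ∈ Wg.support, z ∈ c.support → z = a ∨ z = b := by
    intro z hz hzc
    rw [hWg] at hz
    rcases List.mem_cons.1 hz with hz | hz
    · exact Or.inl hz
    · rw [List.mem_append] at hz
      rcases hz with hz | hz
      · exact absurd hzc (hm₂ z hz)
      · exact Or.inr (by simpa using hz)
  rcases lemK hG hc haS hbS Wg hWs with heq' | hedge
  · exact absurd heq' hab
  · have hh := edge_head Wg (hWg ▸ hnds) hedge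
    rw [hWg, List.tail_cons] at hh
    cases m₂ with
    | nil => rfl
    | cons z m₂' =>
      exfalso
      have : z = b := by simpa using hh
      subst this
      have := List.nodup_cons.1 hnds
      have h2 := (List.nodup_append'.mp this.2).2.2
      exact h2 (List.mem_cons_self) (List.mem_singleton_self _)

lemma filter_chain' {x : V} {c : G.Walk x x} (hG : IsCactus G) (hc : c.IsCycle)
    (A : V → V → Prop) (l' : List V)
    (hchA : l'.Chain' A) (hchG : l'.Chain' G.Adj) (hnd : l'.Nodup) :
    (l'.filter (fun z => z ∈ c.support)).Chain' A := by
  suffices H : ∀ m m₁, l' = m₁ ++ m → (m.filter (fun z => z ∈ c.support)).Chain' A from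
    H l' [] rfl
  intro m
  induction m with
  | nil => intro m₁ heq; exact List.isChain_nil
  | cons y rest ih =>
    intro m₁ heq
    by_cases hy : y ∈ c.support
    · rw [List.filter_cons_of_pos (by simpa using hy)]
      have hih := ih (m₁ ++ [y]) (by rw [heq]; simp)
      rw [List.Chain', List.isChain_cons]
      refine ⟨?_, hih⟩
      intro b hb
      have hb' : (rest.filter (fun z => z ∈ c.support)).head? = some b := hb
      obtain ⟨m₂, m₃, hrest, h0, hbS⟩ := filter_head_split _ rest b hb'
      have hm₂ : m₂ = [] := seg_lemma hG hc l' m₁ m₂ m₃ y b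
        (by rw [heq, hrest]) hnd hchG hy (by simpa using hbS)
        (fun z hz => by simpa using h0 z hz)
      subst hm₂
      rw [hrest] at heq
      have hsuf : (y :: b :: m₃).Chain' A := hchA.suffix ⟨m₁, by rw [heq]; simp⟩
      exact (List.isChain_cons_cons.1 hsuf).1
    · rw [List.filter_cons_of_neg (by simpa using hy)]
      exact ih (m₁ ++ [y]) (by rw [heq]; simp)

end Aux5


/-- in an oriented cactus, if a directed `(u,v)`-path meets a cycle `C`
in a directed `(w1,wq)`-subpath with at least two vertices, then the intersection of
every directed `(u,v)`-path with `C` is a directed `(w1,wq)`-path. -/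
theorem stmt_16 [DecidableEq V] (G : SimpleGraph V) (hG : IsCactus G)
    (A : V → V → Prop) (hA : Oriented A)
    (horient : ∀ u v, G.Adj u v ↔ (A u v ∨ A v u))
    (u v x : V) (c : G.Walk x x) (hc : c.IsCycle)
    (l : List V) (hl : DiwalkFrom A u v l) (hnd : l.Nodup)
    (w1 wq : V)
    (hint : DiwalkFrom A w1 wq (l.filter (fun z => z ∈ c.support)))
    (h2 : 2 ≤ (l.filter (fun z => z ∈ c.support)).length) :
    ∀ l', DiwalkFrom A u v l' → l'.Nodup →
      DiwalkFrom A w1 wq (l'.filter (fun z => z ∈ c.support)) := by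
  obtain ⟨hchAl, hul, hvl⟩ := hl
  have hchG : l.Chain' G.Adj := hchAl.imp (fun a b h => (horient a b).2 (Or.inl h))
  obtain ⟨hchAf, hf1, hfq⟩ := hint
  have hfnd : (l.filter (fun z => z ∈ c.support)).Nodup := hnd.filter _
  have hne : w1 ≠ wq := by
    cases hf : l.filter (fun z => z ∈ c.support) with
    | nil => rw [hf] at hf1; simp at hf1
    | cons a t =>
      rw [hf] at hf1 hfq h2 hfnd
      have ha : a = w1 := by simpa using hf1
      subst ha
      cases t with
      | nil => simp at h2
      | cons b t' =>
        rw [List.getLast?_cons_cons] at hfq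
        have hwqmem : wq ∈ b :: t' := List.mem_of_getLast? hfq
        intro h
        subst h
        exact (List.nodup_cons.1 hfnd).1 hwqmem
  have hw1S : w1 ∈ c.support := by
    obtain ⟨l₀, l₁, -, -, h⟩ := filter_head_split _ l w1 hf1
    simpa using h
  have hwqS : wq ∈ c.support := by
    have h := List.mem_of_getLast? hfq
    have := (List.mem_filter.1 h).2
    simpa using this
  intro l' hl' hnd'
  obtain ⟨hchAl', hul', hvl'⟩ := hl'
  have hchG' : l'.Chain' G.Adj := hchAl'.imp (fun a b h => (horient a b).2 (Or.inl h))
  have hfne : l'.filter (fun z => z ∈ c.support) ≠ [] :=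
    meets_cycle hG hc u v l l' hchG hchG' hul hvl hul' hvl' w1 wq hf1 hfq hne
  have hhead : (l'.filter (fun z => z ∈ c.support)).head? = some w1 := by
    cases hf' : l'.filter (fun z => z ∈ c.support) with
    | nil => exact absurd hf' hfne
    | cons a t =>
      have ha : (l'.filter (fun z => z ∈ c.support)).head? = some a := by rw [hf']; rfl
      have := entry_unique hG hc u l l' hchG hchG' hul hul' w1 a hf1 ha
      simp [this]
  have hlast : (l'.filter (fun z => z ∈ c.support)).getLast? = some wq := by
    have hchGr : l.reverse.Chain' G.Adj :=
      List.isChain_reverse.2 (hchG.imp (fun a b h => h.symm))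
    have hchGr' : l'.reverse.Chain' G.Adj :=
      List.isChain_reverse.2 (hchG'.imp (fun a b h => h.symm))
    have hur : l.reverse.head? = some v := by rw [List.head?_reverse]; exact hvl
    have hur' : l'.reverse.head? = some v := by rw [List.head?_reverse]; exact hvl'
    have hwr : (l.reverse.filter (fun z => z ∈ c.support)).head? = some wq := by
      rw [List.filter_reverse, List.head?_reverse]; exact hfq
    cases hgl : (l'.filter (fun z => z ∈ c.support)).getLast? with
    | none => exact absurd (List.getLast?_eq_none_iff.1 hgl) hfne
    | some b =>
      have hbr : (l'.reverse.filter (fun z => z ∈ c.support)).head? = some b := by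
        rw [List.filter_reverse, List.head?_reverse]; exact hgl
      have := entry_unique hG hc v l.reverse l'.reverse hchGr hchGr' hur hur' wq b hwr hbr
      rw [this]
  exact ⟨filter_chain' hG hc A l' hchAl' hchG' hnd', hhead, hlast⟩
end

section
/- Let D be an oriented cactus and C a receiver trap cycle of D (a directed cycle all of whose cut-vertices have in-neighbors outside C but no out-neighbors outside C). Then V(C) is co-convex in D, i.e., V(D) \ V(C) is geodesically convex. Consequently, every hull set of D contains a vertex of C. -/
variable {V : Type*}

open SimpleGraph in
lemma cut_aux {G : SimpleGraph V} (hG : IsCactus G) {a b : V}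
    (d : G.Walk a a) (hd : d.IsCycle) (hb : b ∉ d.support) (hab : G.Adj a b)
    (hcon : (G.induce {w | w ≠ a}).Connected) : False := by
  haveI := Classical.decEq V
  cases d with
  | nil => exact Walk.IsCycle.not_of_nil hd
  | @cons _ y _ hay p =>
    rw [Walk.cons_isCycle_iff] at hd
    have hyd : y ∈ (Walk.cons hay p).support := by simp
    have hba : b ≠ a := fun h => hb (h ▸ (Walk.cons hay p).start_mem_support)
    have hby : b ≠ y := fun h => hb (h ▸ hyd)
    -- walk from b to y avoiding a
    obtain ⟨q⟩ := hcon.preconnected ⟨b, hba⟩ ⟨y, hay.ne'⟩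
    let f : G.induce {w | w ≠ a} ↪g G := SimpleGraph.Embedding.induce {w | w ≠ a}
    have hane : ∀ z ∈ (q.map f.toHom).support, z ≠ a := by
      intro z hz
      rw [Walk.support_map] at hz
      obtain ⟨⟨z', hz'⟩, _, rfl⟩ := List.mem_map.mp hz
      exact hz'
    set r : G.Walk b y := (q.map f.toHom).bypass with hr
    have hrp : r.IsPath := (q.map f.toHom).bypass_isPath
    have har : a ∉ r.support := fun h =>
      (hane a ((q.map f.toHom).support_bypass_subset h)) rfl
    -- the new cycle
    have hw : (r.concat hay.symm).IsPath := by
      rw [Walk.isPath_def, Walk.support_concat,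
        List.nodup_append]
      exact ⟨hrp.support_nodup, List.nodup_singleton a,
        by simpa using fun z hz (hza : z = a) => har (hza ▸ hz)⟩
    have hcyc : (Walk.cons hab (r.concat hay.symm)).IsCycle := by
      rw [Walk.cons_isCycle_iff]
      refine ⟨hw, ?_⟩
      rw [Walk.edges_concat, List.concat_eq_append, List.mem_append]
      rintro (h | h)
      · exact har (r.fst_mem_support_of_mem_edges h)
      · simp only [List.mem_singleton, Sym2.eq_iff] at h
        rcases h with ⟨h1, h2⟩ | ⟨h1, h2⟩
        · exact hba h2
        · exact hby h2
    have hshare : s(a, y) ∈ (Walk.cons hay p).edges := by simp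
    have hshare' : s(a, y) ∈ (Walk.cons hab (r.concat hay.symm)).edges := by
      rw [Walk.edges_cons, Walk.edges_concat]
      have hfy : (f ⟨y, hay.ne'⟩ : V) = y := rfl
      right
      simp only [List.concat_eq_append]
      show s(a, y) ∈ r.edges ++ [s(y, a)]
      simp [Sym2.eq_swap]
    have := hG.2 (Walk.cons hay p) (Walk.cons hab (r.concat hay.symm))
      (by rw [Walk.cons_isCycle_iff]; exact hd) hcyc ⟨s(a, y), hshare, hshare'⟩
    have hab' : s(a, b) ∈ (Walk.cons hay p).edges := (this s(a, b)).mpr (by simp)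
    exact hb ((Walk.cons hay p).snd_mem_support_of_mem_edges hab')


lemma exit_pair {A : V → V → Prop} {T : Set V} :
    ∀ (l : List V), l.Chain' A → ∀ v : V, l.getLast? = some v → v ∉ T →
      ∀ w ∈ l, w ∈ T → ∃ p q, A p q ∧ p ∈ T ∧ q ∉ T := by
  intro l
  induction l with
  | nil => intro _ v _ _ w hw; simp at hw
  | cons a t ih =>
    intro hch v hlast hv w hw hwT
    cases t with
    | nil =>
      obtain rfl : w = a := by simpa using hw
      obtain rfl : w = v := by simpa using hlast
      exact absurd hwT hv
    | cons a1 t1 =>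
      simp only [List.Chain', List.isChain_cons_cons] at hch
      have hlast' : (a1 :: t1).getLast? = some v := by
        rwa [List.getLast?_cons_cons] at hlast
      rcases List.mem_cons.mp hw with rfl | hw'
      · by_cases h1 : a1 ∈ T
        · exact ih hch.2 v hlast' hv a1 List.mem_cons_self h1
        · exact ⟨w, a1, hch.1, hwT, h1⟩
      · exact ih hch.2 v hlast' hv w hw' hwT

/-- in an oriented cactus, the vertex set of a receiver trap cycle is
co-convex; hence every hull set contains a vertex of the cycle. -/
theorem stmt_17 (G : SimpleGraph V) (hG : IsCactus G)
    (A : V → V → Prop) (hA : Oriented A)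
    (horient : ∀ u v, G.Adj u v ↔ (A u v ∨ A v u))
    (x : V) (c : G.Walk x x) (hc : c.IsCycle)
    (hdir : ∀ d ∈ c.darts, A d.toProd.1 d.toProd.2)
    (hrcv : ∀ u ∈ c.support, IsCutVertex G u → ∃ z, z ∉ c.support ∧ A z u)
    (hntcv : ∀ u ∈ c.support, IsCutVertex G u → ∀ z, A u z → z ∈ c.support) :
    GeoConvex A {v | v ∉ c.support} ∧
    ∀ S : Set V, IsHullSet A S → ∃ v ∈ S, v ∈ c.support := by
  classical
  have hconv : GeoConvex A {v | v ∉ c.support} := by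
    apply Set.Subset.antisymm _ Set.subset_union_left
    intro w hw
    simp only [geoInterval, IsGeodesic, DiwalkFrom, Set.mem_union, Set.mem_setOf_eq] at hw
    rcases hw with hw | ⟨u, hu, v, hv, l, ⟨⟨hch, hhead, hlast⟩, -⟩, hwl⟩
    · exact hw
    · by_contra hwc
      simp only [Set.mem_setOf_eq, not_not] at hwc
      obtain ⟨p, q, hApq, hpC, hqC⟩ := exit_pair (T := {z | z ∈ c.support}) l hch v hlast hv w hwl hwc
      have hcut : IsCutVertex G p := by
        refine ⟨hG.1, fun hcon => ?_⟩
        have hsub : ∀ z, z ∈ (c.rotate p hpC).support → z ∈ c.support := by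
          intro z hz
          rw [SimpleGraph.Walk.rotate, SimpleGraph.Walk.mem_support_append_iff] at hz
          rcases hz with hz | hz
          · exact SimpleGraph.Walk.support_dropUntil_subset _ _ hz
          · exact SimpleGraph.Walk.support_takeUntil_subset _ _ hz
        exact cut_aux hG (c.rotate p hpC) (hc.rotate hpC)
          (fun h => hqC (hsub q h)) ((horient p q).mpr (Or.inl hApq)) hcon
      exact hqC (hntcv p hpC hcut q hApq)
  refine ⟨hconv, fun S hS => ?_⟩
  by_contra h
  push_neg at h
  have hx : x ∈ geoHull A S := by rw [hS]; trivial
  have hx2 : x ∈ {v | v ∉ c.support} :=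
    Set.mem_sInter.mp hx _ ⟨fun v hv => h v hv, hconv⟩
  exact hx2 c.start_mem_support
end

section
/- Let D be an oriented cactus and C a directed leaf cycle (a directed cycle with exactly one cut-vertex w) that is not a trap cycle. Then V(C) \ {w} is a co-convex set of D, i.e., V(D) \ (V(C)\{w}) is geodesically convex. -/
variable {V : Type*}

private lemma diwalk_shorten {A : V → V → Prop} : ∀ {l : List V} {u v : V},
    DiwalkFrom A u v l → ¬ l.Nodup → ∃ l', DiwalkFrom A u v l' ∧ l'.length < l.length := by
  intro l
  induction l with
  | nil => exact fun h hnd => absurd List.nodup_nil hnd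
  | cons y t ih =>
    intro u v h hnd
    obtain ⟨hch, hhd, hlast⟩ := h
    have hyu : y = u := by simpa using hhd
    subst hyu
    by_cases hyt : y ∈ t
    · obtain ⟨t₁, t₂, rfl⟩ := List.append_of_mem hyt
      refine ⟨y :: t₂, ⟨hch.suffix ⟨y :: t₁, by simp⟩, rfl, ?_⟩, by simp⟩
      rw [show y :: (t₁ ++ y :: t₂) = (y :: t₁) ++ (y :: t₂) by simp] at hlast
      rwa [List.getLast?_append_of_ne_nil _ (by simp)] at hlast
    · match t with
      | [] => exact absurd (by simp) hnd
      | z :: r =>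
        have hnt : ¬ (z :: r).Nodup := fun hh => hnd (List.nodup_cons.mpr ⟨hyt, hh⟩)
        obtain ⟨l', ⟨h1, h2, h3⟩, h4⟩ :=
          ih (u := z) (v := v) ⟨hch.tail, rfl, by rwa [List.getLast?_cons_cons] at hlast⟩ hnt
        have hl'ne : l' ≠ [] := by rintro rfl; simp at h2
        refine ⟨y :: l', ⟨List.isChain_cons.mpr ⟨?_, h1⟩, rfl, ?_⟩, by simpa using h4⟩
        · intro b hb
          rw [h2] at hb
          obtain rfl : z = b := by simpa using hb
          exact (List.isChain_cons_cons.mp hch).1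
        · rw [show y :: l' = [y] ++ l' by simp, List.getLast?_append_of_ne_nil _ hl'ne]
          exact h3

private lemma chain_find_w {A : V → V → Prop} {R : V → Prop} {w : V} {l : List V}
    (hch : l.Chain' A) (hstep : ∀ a b, A a b → R b → R a ∨ a = w) :
    ∀ i (hi : i < l.length), R (l.get ⟨i, hi⟩) → ¬ R (l.get ⟨0, by omega⟩) →
      ∃ j, j ≤ i ∧ ∃ hj : j < l.length, l.get ⟨j, hj⟩ = w := by
  intro i
  induction i with
  | zero => exact fun hi hR h0 => absurd hR h0
  | succ k ih =>
    intro hi hR h0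
    have hA : A (l.get ⟨k, by omega⟩) (l.get ⟨k + 1, hi⟩) :=
      List.isChain_iff_getElem.mp hch k (by omega)
    rcases hstep _ _ hA hR with h | h
    · obtain ⟨j, hj1, hj2⟩ := ih (by omega) h h0
      exact ⟨j, by omega, hj2⟩
    · exact ⟨k, by omega, by omega, h⟩

private lemma nbr_mem_support {G : SimpleGraph V} (hG : IsCactus G)
    {x : V} {c : G.Walk x x} (hc : c.IsCycle) {w : V}
    (honly : ∀ u ∈ c.support, IsCutVertex G u → u = w)
    {v z : V} (hv : v ∈ c.support) (hvw : v ≠ w) (hadj : G.Adj v z) :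
    z ∈ c.support := by
  classical
  by_contra hz
  have hconn : (G.induce {u | u ≠ v}).Connected := by
    by_contra hnc
    exact hvw (honly v hv ⟨hG.1, hnc⟩)
  have hc' := hc.rotate hv
  obtain ⟨s, hvs, p, hp⟩ := SimpleGraph.Walk.not_nil_iff.mp hc'.not_nil
  have he : s(v, s) ∈ c.edges := by
    refine ((c.rotate_edges v hv).perm.mem_iff).mp ?_
    rw [hp]; simp
  have hs : s ∈ c.support := c.snd_mem_support_of_mem_edges he
  have hzv : z ≠ v := hadj.ne'
  have hsv : s ≠ v := hvs.ne'
  have hzs : z ≠ s := fun h => hz (h ▸ hs)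
  obtain ⟨q₀⟩ := hconn.preconnected ⟨z, hzv⟩ ⟨s, hsv⟩
  let q₁ : G.Walk z s := q₀.map (SimpleGraph.Embedding.induce {u | u ≠ v}).toHom
  have hvq₁ : v ∉ q₁.support := by
    simp only [q₁, SimpleGraph.Walk.support_map, List.mem_map]
    intro h0
    have h : v ∈ (q₀.map (SimpleGraph.Embedding.induce {u | u ≠ v}).toHom).support := h0
    rw [SimpleGraph.Walk.support_map, List.mem_map] at h
    obtain ⟨⟨a, ha⟩, -, hav⟩ := h
    exact ha hav
  let q := q₁.bypass
  have hq : q.IsPath := q₁.bypass_isPath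
  have hvq : v ∉ q.support := fun h => hvq₁ (q₁.support_bypass_subset h)
  let p' : G.Walk z v := q.concat hvs.symm
  have hp'path : p'.IsPath := by
    rw [SimpleGraph.Walk.isPath_def, SimpleGraph.Walk.support_concat]
    rw [List.nodup_append]
    exact ⟨hq.support_nodup, List.nodup_singleton v, by simpa using fun a ha (h : a = v) => hvq (h ▸ ha)⟩
  have hne : s(v, z) ∉ p'.edges := by
    rw [SimpleGraph.Walk.edges_concat]
    intro hmem
    rw [List.concat_eq_append, List.mem_append] at hmem
    rcases hmem with h | h
    · exact hvq (SimpleGraph.Walk.fst_mem_support_of_mem_edges q h)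
    · rw [List.mem_singleton, Sym2.eq_iff] at h
      rcases h with ⟨h1, h2⟩ | ⟨h1, h2⟩
      · exact hsv h1.symm
      · exact hzs h2
  have hc₂ : (SimpleGraph.Walk.cons hadj p').IsCycle :=
    (SimpleGraph.Walk.cons_isCycle_iff p' hadj).mpr ⟨hp'path, hne⟩
  have hshare : s(v, s) ∈ (SimpleGraph.Walk.cons hadj p').edges := by
    rw [SimpleGraph.Walk.edges_cons, SimpleGraph.Walk.edges_concat]
    simp [Sym2.eq_swap]
  have key := hG.2 (SimpleGraph.Walk.cons hadj p') c hc₂ hc ⟨s(v, s), hshare, he⟩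
  have : s(v, z) ∈ c.edges := (key s(v, z)).mp (by simp)
  exact hz (c.snd_mem_support_of_mem_edges this)


/-- in an oriented cactus, for a directed leaf cycle `C` with unique
cut-vertex `w` that is not a trap cycle, `V(C) \ {w}` is co-convex. -/
theorem stmt_18 (G : SimpleGraph V) (hG : IsCactus G)
    (A : V → V → Prop) (hA : Oriented A)
    (horient : ∀ u v, G.Adj u v ↔ (A u v ∨ A v u))
    (x : V) (c : G.Walk x x) (hc : c.IsCycle)
    (hdir : ∀ d ∈ c.darts, A d.toProd.1 d.toProd.2)
    (w : V) (hw : w ∈ c.support) (hwcut : IsCutVertex G w)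
    (honly : ∀ u ∈ c.support, IsCutVertex G u → u = w)
    (hnottrap : ¬ (((∃ z, z ∉ c.support ∧ A z w) ∧ ¬ ∃ z, z ∉ c.support ∧ A w z) ∨
                   ((∃ z, z ∉ c.support ∧ A w z) ∧ ¬ ∃ z, z ∉ c.support ∧ A z w))) :
    GeoConvex A {v | ¬ (v ∈ c.support ∧ v ≠ w)} := by
  have hnbr : ∀ a b, G.Adj a b → a ∈ c.support → a ≠ w → b ∈ c.support :=
    fun a b hab ha haw => nbr_mem_support hG hc honly ha haw hab
  have hstep : ∀ a b, A a b → (b ∈ c.support ∧ b ≠ w) → (a ∈ c.support ∧ a ≠ w) ∨ a = w := by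
    rintro a b hab ⟨hb1, hb2⟩
    by_cases haw : a = w
    · exact Or.inr haw
    · exact Or.inl ⟨hnbr b a ((horient a b).mpr (Or.inl hab)).symm hb1 hb2, haw⟩
  have hstep' : ∀ a b, (flip A) a b → (b ∈ c.support ∧ b ≠ w) →
      (a ∈ c.support ∧ a ≠ w) ∨ a = w := by
    rintro a b hab ⟨hb1, hb2⟩
    by_cases haw : a = w
    · exact Or.inr haw
    · exact Or.inl ⟨hnbr b a ((horient b a).mpr (Or.inl hab)) hb1 hb2, haw⟩
  unfold GeoConvex geoInterval
  rw [Set.union_eq_left]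
  rintro m ⟨u, hu, v, hv, l, hgeo, hm⟩
  simp only [Set.mem_setOf_eq]
  by_contra hmS
  obtain ⟨n, rfl⟩ := List.mem_iff_get.mp hm
  obtain ⟨i, hil⟩ := n
  obtain ⟨hmc, hmw⟩ := hmS
  have hnd : l.Nodup := by
    by_contra h
    obtain ⟨l', h1, h2⟩ := diwalk_shorten hgeo.1 h
    have := hgeo.2 l' h1
    omega
  have hlen : 0 < l.length := Nat.lt_of_le_of_lt (Nat.zero_le _) hil
  have hne : l ≠ [] := List.ne_nil_of_length_pos hlen
  have hu0 : l.get ⟨0, hlen⟩ = u := by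
    have h1 := hgeo.1.2.1
    rw [List.head?_eq_head hne] at h1
    simpa [List.get_eq_getElem, List.getElem_zero] using h1
  have hvlast : l.get ⟨l.length - 1, by omega⟩ = v := by
    have h1 := hgeo.1.2.2
    rw [List.getLast?_eq_getLast hne] at h1
    simpa [List.getLast_eq_getElem, List.get_eq_getElem] using h1
  -- w occurs at some index j₁ ≤ i
  have h0 : ¬ (l.get ⟨0, hlen⟩ ∈ c.support ∧ l.get ⟨0, hlen⟩ ≠ w) := by
    rw [hu0]; exact hu
  obtain ⟨j₁, hj₁i, hj₁l, hj₁w⟩ := chain_find_w hgeo.1.1 hstep i hil ⟨hmc, hmw⟩ h0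
  -- w occurs at some index j₂ ≥ i (via the reversed list)
  have hchr : l.reverse.Chain' (flip A) := List.isChain_reverse.mpr hgeo.1.1
  have hi' : l.length - 1 - i < l.reverse.length := by simp; omega
  have hrev : ∀ (j : ℕ) (h : j < l.reverse.length) (h' : l.length - 1 - j < l.length),
      l.reverse.get ⟨j, h⟩ = l.get ⟨l.length - 1 - j, h'⟩ := by
    intro j h h'
    simp [List.get_eq_getElem, List.getElem_reverse]
  have key : ∀ (a b : ℕ) (ha : a < l.length) (hb : b < l.length), a = b →
      l.get ⟨a, ha⟩ = l.get ⟨b, hb⟩ := by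
    intro a b ha hb h
    subst h
    rfl
  have hRrev : l.reverse.get ⟨l.length - 1 - i, hi'⟩ ∈ c.support ∧
      l.reverse.get ⟨l.length - 1 - i, hi'⟩ ≠ w := by
    rw [hrev _ _ (by omega), key _ i _ hil (by omega)]
    exact ⟨hmc, hmw⟩
  have h0rev : ¬ (l.reverse.get ⟨0, by omega⟩ ∈ c.support ∧
      l.reverse.get ⟨0, by omega⟩ ≠ w) := by
    rw [hrev _ _ (by omega), key (l.length - 1 - 0) (l.length - 1) (by omega) (by omega)
      (by omega), hvlast]
    exact hv
  obtain ⟨j', hj'le, hj'l, hj'w⟩ := chain_find_w hchr hstep' _ hi' hRrev h0rev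
  have hj₂l : l.length - 1 - j' < l.length := by omega
  have hj₂w : l.get ⟨l.length - 1 - j', hj₂l⟩ = w := by
    rw [← hrev _ hj'l hj₂l]
    exact hj'w
  have hij₂ : i ≤ l.length - 1 - j' := by
    have := hj'l
    simp only [List.length_reverse] at this
    omega
  have hinj := List.nodup_iff_injective_get.mp hnd
  have hj₁ne : j₁ ≠ i := by
    intro h
    subst h
    exact hmw (by rw [← hj₁w])
  have hj₂ne : l.length - 1 - j' ≠ i := by
    intro h
    exact hmw ((key i (l.length - 1 - j') hil hj₂l h.symm).trans hj₂w)
  have : (⟨j₁, hj₁l⟩ : Fin l.length) = ⟨l.length - 1 - j', hj₂l⟩ :=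
    hinj (by rw [hj₁w, hj₂w])
  have : j₁ = l.length - 1 - j' := by simpa using this
  omega
end
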